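/- arXiv:1205.5583 — 11 statements merged into one kernel-verified Lean document; each statement's English description precedes it below -/
import Mathlib

section
/- Let $T$ be a positive operator on a Banach lattice $X$ that is not semi non-supporting, i.e., there exist nonzero positive $x \in X$ and nonzero positive $x' \in X'$ such that $x'(T^p x) = 0$ for all $p \geq 0$. Then the closed ideal generated by the element $z = \sum_{n : T^n x \neq 0} \frac{T^n x}{2^n \|T^n x\|}$ is a nontrivial closed $T$-invariant ideal. -/
open Filter Topology

section Aux

variable {X : Type*} [NormedAddCommGroup X] [Lattice X] [HasSolidNorm X]
    [IsOrderedAddMonoid X] [NormedSpace ℝ X]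

private lemma aux_half_smul_nonneg {v : X} (hv : 0 ≤ v) : 0 ≤ (2⁻¹ : ℝ) • v := by
  apply nsmul_two_semiclosed
  have : (2 : ℕ) • ((2⁻¹ : ℝ) • v) = v := by
    rw [two_nsmul, ← add_smul]
    norm_num
  rw [this]
  exact hv

private lemma aux_smul_nonneg {c : ℝ} {v : X} (hc : 0 ≤ c) (hv : 0 ≤ v) : 0 ≤ c • v := by
  have key : ∀ (k m : ℕ), 0 ≤ ((k : ℝ) * (2⁻¹ : ℝ) ^ m) • v := by
    intro k m
    have hm : 0 ≤ ((2⁻¹ : ℝ) ^ m) • v := by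
      induction m with
      | zero => simpa using hv
      | succ m ih =>
        rw [pow_succ, mul_comm, mul_smul]
        exact aux_half_smul_nonneg ih
    rw [mul_smul, Nat.cast_smul_eq_nsmul]
    exact nsmul_nonneg hm k
  have hseq : Tendsto (fun n : ℕ => ((⌈c * 2 ^ n⌉₊ : ℝ) * (2⁻¹ : ℝ) ^ n)) atTop (𝓝 c) := by
    have hle : ∀ n : ℕ, c ≤ (⌈c * 2 ^ n⌉₊ : ℝ) * (2⁻¹ : ℝ) ^ n := by
      intro n
      have h1 : c * 2 ^ n ≤ (⌈c * 2 ^ n⌉₊ : ℝ) := Nat.le_ceil _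
      have h2 : (0 : ℝ) < (2⁻¹ : ℝ) ^ n := by positivity
      calc c = (c * 2 ^ n) * (2⁻¹ : ℝ) ^ n := by
              rw [mul_assoc, ← mul_pow]; norm_num
        _ ≤ (⌈c * 2 ^ n⌉₊ : ℝ) * (2⁻¹ : ℝ) ^ n := by
              exact mul_le_mul_of_nonneg_right h1 h2.le
    have hge : ∀ n : ℕ, (⌈c * 2 ^ n⌉₊ : ℝ) * (2⁻¹ : ℝ) ^ n ≤ c + (2⁻¹ : ℝ) ^ n := by
      intro n
      have h0 : (0 : ℝ) ≤ c * 2 ^ n := by positivity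
      have h1 : (⌈c * 2 ^ n⌉₊ : ℝ) ≤ c * 2 ^ n + 1 := (Nat.ceil_lt_add_one h0).le
      have h2 : (0 : ℝ) < (2⁻¹ : ℝ) ^ n := by positivity
      calc (⌈c * 2 ^ n⌉₊ : ℝ) * (2⁻¹ : ℝ) ^ n
          ≤ (c * 2 ^ n + 1) * (2⁻¹ : ℝ) ^ n := mul_le_mul_of_nonneg_right h1 h2.le
        _ = c + (2⁻¹ : ℝ) ^ n := by
            rw [add_mul, mul_assoc, ← mul_pow, one_mul]; norm_num
    have htop : Tendsto (fun n : ℕ => c + (2⁻¹ : ℝ) ^ n) atTop (𝓝 (c + 0)) :=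
      tendsto_const_nhds.add
        (tendsto_pow_atTop_nhds_zero_of_lt_one (by norm_num) (by norm_num))
    rw [add_zero] at htop
    exact tendsto_of_tendsto_of_tendsto_of_le_of_le tendsto_const_nhds htop hle hge
  have := hseq.smul_const v
  exact ge_of_tendsto' this fun n => key _ _

private lemma aux_smul_le_smul {c d : ℝ} {v : X} (h : c ≤ d) (hv : 0 ≤ v) :
    c • v ≤ d • v := by
  have := aux_smul_nonneg (sub_nonneg.2 h) hv
  rw [sub_smul] at this
  exact sub_nonneg.1 this

private lemma aux_smul_mono {c : ℝ} {u v : X} (hc : 0 ≤ c) (h : u ≤ v) :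
    c • u ≤ c • v := by
  have := aux_smul_nonneg hc (sub_nonneg.2 h)
  rw [smul_sub] at this
  exact sub_nonneg.1 this

private lemma aux_smul_le_abs (c : ℝ) (a : X) : c • a ≤ |c| • |a| := by
  rcases le_total 0 c with h | h
  · calc c • a ≤ c • |a| := aux_smul_mono h (le_abs_self a)
      _ ≤ |c| • |a| := aux_smul_le_smul (le_abs_self c) (abs_nonneg a)
  · calc c • a = (-c) • (-a) := by rw [neg_smul_neg]
      _ ≤ (-c) • |a| := aux_smul_mono (neg_nonneg.2 h) (neg_le_abs a)
      _ ≤ |c| • |a| := aux_smul_le_smul (neg_le_abs c) (abs_nonneg a)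

private lemma aux_abs_smul_le (c : ℝ) (a : X) : |c • a| ≤ |c| • |a| := by
  refine abs_le'.mpr ⟨aux_smul_le_abs c a, ?_⟩
  have := aux_smul_le_abs (-c) a
  rwa [neg_smul, abs_neg] at this

end Aux

open Classical in
/-- If a positive operator `T` on a Banach lattice is not semi non-supporting,
witnessed by positive nonzero `x` and `x'` with `x' (T^p x) = 0` for all `p`,
then the closed ideal generated by `z = ∑ Tⁿx / (2ⁿ‖Tⁿx‖)` is a nontrivial
closed `T`-invariant ideal. -/
theorem stmt1 {X : Type*} [NormedAddCommGroup X] [Lattice X] [HasSolidNorm X]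
    [IsOrderedAddMonoid X] [NormedSpace ℝ X]
    [CompleteSpace X]
    (T : X →L[ℝ] X) (hT : ∀ x : X, 0 ≤ x → 0 ≤ T x)
    (x : X) (hx : 0 ≤ x) (hx0 : x ≠ 0)
    (x' : X →L[ℝ] ℝ) (hx' : ∀ y : X, 0 ≤ y → 0 ≤ x' y) (hx'0 : x' ≠ 0)
    (hzero : ∀ p : ℕ, x' ((T ^ p) x) = 0)
    (z : X)
    (hz : z = ∑' n : ℕ, if (T ^ n) x = 0 then (0 : X)
        else ((2 : ℝ) ^ n * ‖(T ^ n) x‖)⁻¹ • (T ^ n) x)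
    (I : Set X) (hI : I = closure {y : X | ∃ c : ℝ, |y| ≤ c • |z|}) :
    I ≠ {0} ∧ I ≠ Set.univ ∧ IsClosed I ∧
      (∀ y ∈ I, ∀ w : X, |w| ≤ |y| → w ∈ I) ∧
      (∀ a ∈ I, ∀ b ∈ I, a + b ∈ I) ∧
      (∀ (c : ℝ), ∀ a ∈ I, c • a ∈ I) ∧
      (∀ a ∈ I, T a ∈ I) := by
  set f : ℕ → X := fun n => if (T ^ n) x = 0 then (0 : X)
      else ((2 : ℝ) ^ n * ‖(T ^ n) x‖)⁻¹ • (T ^ n) x with hf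
  set S : Set X := {y : X | ∃ c : ℝ, |y| ≤ c • |z|} with hS
  -- basic monotonicity facts
  have hTmono : ∀ a b : X, a ≤ b → T a ≤ T b := by
    intro a b h
    have := hT (b - a) (sub_nonneg.2 h)
    rw [map_sub] at this
    exact sub_nonneg.1 this
  have hx'mono : ∀ a b : X, a ≤ b → x' a ≤ x' b := by
    intro a b h
    have := hx' (b - a) (sub_nonneg.2 h)
    rw [map_sub] at this
    linarith
  -- positivity of iterates
  have hTn : ∀ n : ℕ, 0 ≤ (T ^ n) x := by
    intro n
    induction n with
    | zero => simpa using hx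
    | succ n ih =>
      rw [pow_succ', ContinuousLinearMap.mul_apply]
      exact hT _ ih
  -- each term is nonneg
  have hfnonneg : ∀ n : ℕ, 0 ≤ f n := by
    intro n
    by_cases h : (T ^ n) x = 0
    · simp only [hf, if_pos h, le_refl]
    · simp only [hf, if_neg h]
      exact aux_smul_nonneg (by positivity) (hTn n)
  -- norm bound
  have hfnorm : ∀ n : ℕ, ‖f n‖ ≤ (2⁻¹ : ℝ) ^ n := by
    intro n
    by_cases h : (T ^ n) x = 0
    · simp only [hf, if_pos h, norm_zero]; positivity
    · have hpos : 0 < ‖(T ^ n) x‖ := norm_pos_iff.mpr h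
      simp only [hf, if_neg h, norm_smul]
      rw [Real.norm_eq_abs, abs_of_nonneg (by positivity), mul_inv, mul_assoc,
        inv_mul_cancel₀ hpos.ne', mul_one, ← inv_pow]
  have hsum : Summable f :=
    Summable.of_norm_bounded (summable_geometric_of_lt_one (by norm_num) (by norm_num)) hfnorm
  have hzf : z = ∑' n, f n := hz
  have hzpos : 0 ≤ z := hzf ▸ tsum_nonneg hfnonneg
  have habsz : |z| = z := abs_of_nonneg hzpos
  have hf0 : f 0 = ‖x‖⁻¹ • x := by
    simp only [hf, pow_zero, one_mul, ContinuousLinearMap.one_apply, if_neg hx0]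
  have hf0le : f 0 ≤ z := hzf ▸ Summable.le_tsum hsum 0 fun i _ => hfnonneg i
  have hzne : z ≠ 0 := by
    intro h
    have h1 : f 0 ≤ 0 := h ▸ hf0le
    have h2 : f 0 = 0 := le_antisymm h1 (hfnonneg 0)
    rw [hf0, smul_eq_zero] at h2
    rcases h2 with h2 | h2
    · exact hx0 (by simpa [norm_eq_zero] using inv_eq_zero.mp h2)
    · exact hx0 h2
  -- x' vanishes on z
  have hx'z : x' z = 0 := by
    rw [hzf, ContinuousLinearMap.map_tsum x' hsum]
    have : ∀ n, x' (f n) = 0 := by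
      intro n
      by_cases h : (T ^ n) x = 0
      · simp only [hf, if_pos h, map_zero]
      · simp only [hf, if_neg h, map_smul, hzero n, smul_eq_mul, mul_zero]
    simp [this]
  -- members of S can use a nonneg constant
  have hS' : ∀ y ∈ S, ∃ c : ℝ, 0 ≤ c ∧ |y| ≤ c • z := by
    rintro y ⟨c, hc⟩
    refine ⟨|c|, abs_nonneg c, ?_⟩
    calc |y| ≤ c • |z| := hc
      _ ≤ |c| • |z| := aux_smul_le_smul (le_abs_self c) (abs_nonneg z)
      _ = |c| • z := by rw [habsz]
  -- x' vanishes on |y| for y in S, hence on closure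
  have hkey : ∀ y ∈ I, x' |y| = 0 := by
    have hcl : closure S ⊆ {y : X | x' |y| = 0} := by
      apply closure_minimal
      · rintro y hy
        obtain ⟨c, hc0, hc⟩ := hS' y hy
        have h1 : x' |y| ≤ x' (c • z) := hx'mono _ _ hc
        rw [map_smul, hx'z, smul_eq_mul, mul_zero] at h1
        exact le_antisymm h1 (hx' _ (abs_nonneg y))
      · have hcont : Continuous fun y : X => x' |y| := by
          have habscont : Continuous fun y : X => |y| := continuous_id.sup continuous_neg
          exact x'.continuous.comp habscont
        exact isClosed_eq hcont continuous_const
    intro y hy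
    exact hcl (hI ▸ hy)
  have hzI : z ∈ I := by
    rw [hI]
    exact subset_closure ⟨1, by rw [one_smul]⟩
  refine ⟨?_, ?_, ?_, ?_, ?_, ?_, ?_⟩
  -- I ≠ {0}
  · intro h
    rw [h] at hzI
    exact hzne hzI
  -- I ≠ univ
  · intro h
    obtain ⟨u, hu⟩ : ∃ u : X, x' u ≠ 0 := by
      by_contra hc
      push_neg at hc
      exact hx'0 (by ext v; simp [hc v])
    have h1 : x' u ≤ x' |u| := hx'mono _ _ (le_abs_self u)
    have h2 : -x' u ≤ x' |u| := by
      have := hx'mono _ _ (neg_le_abs u)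
      rwa [map_neg] at this
    have h3 : x' |u| = 0 := hkey u (by rw [h]; trivial)
    rw [h3] at h1 h2
    rcases hu.lt_or_gt with h4 | h4 <;> linarith
  -- closed
  · rw [hI]; exact isClosed_closure
  -- ideal property
  · intro y hy w hw
    set φ : X → X := fun u => (w ⊓ |u|) ⊔ (-|u|) with hφ
    have hφcont : Continuous φ := by
      have habscont : Continuous fun y : X => |y| := continuous_id.sup continuous_neg
      exact (continuous_const.inf habscont).sup habscont.neg
    have hφmaps : Set.MapsTo φ S S := by
      rintro u ⟨c, hc⟩
      refine ⟨c, le_trans ?_ hc⟩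
      refine abs_le'.mpr ⟨?_, ?_⟩
      · exact sup_le inf_le_right ((neg_nonpos.2 (abs_nonneg u)).trans (abs_nonneg u))
      · rw [neg_sup, neg_neg]
        exact inf_le_right
    have hφy : φ y = w := by
      have h1 : w ≤ |y| := le_trans (le_abs_self w) hw
      have h2 : -|y| ≤ w := by
        have := neg_le_neg hw
        exact le_trans this (neg_le.1 (neg_le_abs w))
      rw [hφ]
      simp only [inf_eq_left.2 h1, sup_eq_left.2 h2]
    have := map_mem_closure hφcont (hI ▸ hy) hφmaps
    rw [hφy] at this
    rw [hI]
    exact this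
  -- addition
  · intro a ha b hb
    rw [hI]
    refine map_mem_closure₂ continuous_add (hI ▸ ha) (hI ▸ hb) ?_
    rintro u ⟨c, hc⟩ v ⟨d, hd⟩
    refine ⟨c + d, ?_⟩
    calc |u + v| ≤ |u| + |v| := abs_add_le u v
      _ ≤ c • |z| + d • |z| := add_le_add hc hd
      _ = (c + d) • |z| := (add_smul c d |z|).symm
  -- scalar multiplication
  · intro c a ha
    rw [hI]
    refine map_mem_closure (continuous_const_smul c) (hI ▸ ha) ?_
    rintro u ⟨d, hd⟩
    refine ⟨|c| * d, ?_⟩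
    calc |c • u| ≤ |c| • |u| := aux_abs_smul_le c u
      _ ≤ |c| • (d • |z|) := aux_smul_mono (abs_nonneg c) hd
      _ = (|c| * d) • |z| := (mul_smul |c| d |z|).symm
  -- T-invariance
  · intro a ha
    -- termwise bound : T (f n) ≤ (2 * ‖T‖) • f (n + 1)
    have hTf : ∀ n : ℕ, T (f n) ≤ (2 * ‖T‖) • f (n + 1) := by
      intro n
      by_cases h : (T ^ n) x = 0
      · have : f n = 0 := by simp only [hf, if_pos h]
        rw [this, map_zero]
        exact aux_smul_nonneg (by positivity) (hfnonneg (n + 1))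
      · have hsucc : (T ^ (n + 1)) x = T ((T ^ n) x) := by
          rw [pow_succ', ContinuousLinearMap.mul_apply]
        have hfn : T (f n) = ((2 : ℝ) ^ n * ‖(T ^ n) x‖)⁻¹ • (T ^ (n + 1)) x := by
          simp only [hf, if_neg h, map_smul, hsucc]
        by_cases h' : (T ^ (n + 1)) x = 0
        · rw [hfn, h', smul_zero]
          exact aux_smul_nonneg (by positivity) (hfnonneg (n + 1))
        · have hfn1 : f (n + 1) = ((2 : ℝ) ^ (n + 1) * ‖(T ^ (n + 1)) x‖)⁻¹ •
              (T ^ (n + 1)) x := by simp only [hf, if_neg h']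
          rw [hfn, hfn1, smul_smul]
          apply aux_smul_le_smul _ (hTn (n + 1))
          have ha : (0 : ℝ) < ‖(T ^ n) x‖ := norm_pos_iff.mpr h
          have hb : (0 : ℝ) < ‖(T ^ (n + 1)) x‖ := norm_pos_iff.mpr h'
          have hba : ‖(T ^ (n + 1)) x‖ ≤ ‖T‖ * ‖(T ^ n) x‖ := by
            rw [hsucc]; exact T.le_opNorm _
          rw [← one_div, ← div_eq_mul_inv,
            div_le_div_iff₀ (by positivity) (by positivity)]
          have h2n : (0 : ℝ) < 2 ^ n := by positivity
          rw [pow_succ]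
          nlinarith [mul_le_mul_of_nonneg_left hba (le_of_lt h2n)]
    -- T z ≤ (2‖T‖) • z
    have hTz : T z ≤ (2 * ‖T‖) • z := by
      have hsumTf : Summable fun n => T (f n) :=
        hsum.map (T : X →+ X) T.continuous
      have hsumfs : Summable fun n => f (n + 1) := (summable_nat_add_iff 1).mpr hsum
      have hsumg : Summable fun n => (2 * ‖T‖) • f (n + 1) := hsumfs.const_smul _
      have h1 : T z = ∑' n, T (f n) := by
        rw [hzf]; exact T.map_tsum hsum
      have h2 : ∑' n, T (f n) ≤ ∑' n, (2 * ‖T‖) • f (n + 1) :=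
        Summable.tsum_le_tsum hTf hsumTf hsumg
      have h3 : ∑' n, (2 * ‖T‖) • f (n + 1) = (2 * ‖T‖) • ∑' n, f (n + 1) :=
        Summable.tsum_const_smul _ hsumfs
      have h4 : (∑' n, f (n + 1)) ≤ z := by
        have h5 : z = f 0 + ∑' n, f (n + 1) := by rw [hzf]; exact Summable.tsum_eq_zero_add hsum
        have h6 : (∑' n, f (n + 1)) = z - f 0 := by rw [h5]; abel
        rw [h6]
        exact sub_le_self z (hfnonneg 0)
      calc T z = ∑' n, T (f n) := h1
        _ ≤ ∑' n, (2 * ‖T‖) • f (n + 1) := h2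
        _ = (2 * ‖T‖) • ∑' n, f (n + 1) := h3
        _ ≤ (2 * ‖T‖) • z := aux_smul_mono (by positivity) h4
    rw [hI]
    refine map_mem_closure T.continuous (hI ▸ ha) ?_
    rintro u hu
    obtain ⟨c, hc0, hc⟩ := hS' u hu
    have hTu : |T u| ≤ T |u| := by
      refine abs_le'.mpr ⟨hTmono _ _ (le_abs_self u), ?_⟩
      have := hTmono _ _ (neg_le_abs u)
      rwa [map_neg] at this
    refine ⟨c * (2 * ‖T‖), ?_⟩
    calc |T u| ≤ T |u| := hTu
      _ ≤ T (c • z) := hTmono _ _ hc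
      _ = c • T z := by rw [map_smul]
      _ ≤ c • ((2 * ‖T‖) • z) := aux_smul_mono hc0 hTz
      _ = (c * (2 * ‖T‖)) • |z| := by rw [habsz, smul_smul]
end

section
/- Let $K$ be a compact Hausdorff space, $\varphi : K \to K$ continuous, and $T_\varphi f = f \circ \varphi$ the composition operator on $C(K)$. If there is a closed set $U \subseteq K$ with nonempty interior such that $\varphi(U)$ has empty interior, then $T_\varphi$ is not order continuous; that is, there exist a decreasing net $f_\alpha \downarrow 0$ in $C(K)$ and $g \in C(K)$ with $g \gneq 0$ such that $T_\varphi f_\alpha \geq g$ for all $\alpha$. -/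
/-- If some closed set `U ⊆ K` with nonempty interior has image `φ(U)` with empty
interior, then the composition operator `f ↦ f ∘ φ` on `C(K)` is not order
continuous: there is a downward directed set (net) `D` with infimum `0` and a
nonzero positive `g` with `g ≤ f ∘ φ` for all `f ∈ D`. -/
theorem stmt2 {K : Type*} [TopologicalSpace K] [CompactSpace K] [T2Space K]
    (φ : C(K, K))
    (hU : ∃ U : Set K, IsClosed U ∧ (interior U).Nonempty ∧
      interior ((φ : K → K) '' U) = ∅) :
    ∃ D : Set C(K, ℝ), D.Nonempty ∧ DirectedOn (fun f g => g ≤ f) D ∧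
      IsGLB D 0 ∧
      ∃ g : C(K, ℝ), 0 ≤ g ∧ g ≠ 0 ∧ ∀ f ∈ D, g ≤ f.comp φ := by
  obtain ⟨U, hUc, ⟨x₀, hx₀⟩, hemp⟩ := hU
  set V : Set K := (φ : K → K) '' U with hV
  have hVclosed : IsClosed V := (hUc.isCompact.image φ.continuous).isClosed
  -- the directed set
  refine ⟨{f : C(K, ℝ) | 0 ≤ f ∧ ∀ y ∈ V, f y = 1}, ?_, ?_, ?_, ?_⟩
  · exact ⟨1, le_of_eq rfl |>.trans zero_le_one, fun y _ => rfl⟩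
  · rintro f ⟨hf0, hf1⟩ g ⟨hg0, hg1⟩
    refine ⟨f ⊓ g, ⟨le_inf hf0 hg0, fun y hy => ?_⟩, inf_le_left, inf_le_right⟩
    show min (f y) (g y) = 1
    rw [hf1 y hy, hg1 y hy, min_self]
  · constructor
    · rintro f ⟨hf0, -⟩; exact hf0
    · rintro h hh
      have hdense : Dense Vᶜ := interior_eq_empty_iff_dense_compl.mp hemp
      intro x
      show h x ≤ (0 : C(K, ℝ)) x
      have hsub : Vᶜ ⊆ {y | h y ≤ 0} := by
        intro y hy
        obtain ⟨f, hfs, hft, hf01⟩ :=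
          exists_continuous_zero_one_of_isClosed (isClosed_singleton (x := y))
            hVclosed (by simpa [Set.disjoint_singleton_left] using hy)
        have hmem : f ∈ {f : C(K, ℝ) | 0 ≤ f ∧ ∀ z ∈ V, f z = 1} := by
          refine ⟨fun z => (hf01 z).1, fun z hz => ?_⟩
          have := hft hz; simpa using this
        have := hh hmem y
        have hfy : f y = 0 := by have := hfs rfl; simpa using this
        simpa [hfy] using this
      have hclosed : IsClosed {y : K | h y ≤ 0} :=
        isClosed_le h.continuous continuous_const
      have : Dense {y : K | h y ≤ 0} := hdense.mono hsub
      have huniv : {y : K | h y ≤ 0} = Set.univ := by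
        rw [← hclosed.closure_eq]; exact this.closure_eq
      simpa using (huniv ▸ Set.mem_univ x : x ∈ {y | h y ≤ 0})
  · -- the bump g
    obtain ⟨g, hgs, hgt, hg01⟩ :=
      exists_continuous_zero_one_of_isClosed (isClosed_compl_iff.mpr isOpen_interior)
        (isClosed_singleton (x := x₀))
        (by simpa [Set.disjoint_singleton_right] using hx₀)
    refine ⟨g, fun x => (hg01 x).1, ?_, ?_⟩
    · intro hg
      have : g x₀ = 1 := by have := hgt rfl; simpa using this
      rw [hg] at this; simp at this
    · rintro f ⟨hf0, hf1⟩ x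
      show g x ≤ f (φ x)
      by_cases hx : x ∈ U
      · have : f (φ x) = 1 := hf1 _ ⟨x, hx, rfl⟩
        rw [this]; exact (hg01 x).2
      · have hxi : x ∉ interior U := fun h => hx (interior_subset h)
        have : g x = 0 := by have := hgs hxi; simpa using this
        rw [this]; exact hf0 (φ x)
end

section
/- Let $K$ be a compact Hausdorff space, $\varphi : K \to K$ continuous, and $T_\varphi$ the composition operator $f \mapsto f \circ \varphi$ on $C(K)$. If for every closed $U \subseteq K$ with nonempty interior the image $\varphi(U)$ has nonempty interior, then $T_\varphi$ is order continuous. -/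
/-- If the image under `φ` of every closed set with nonempty interior has nonempty
interior, then the composition operator `f ↦ f ∘ φ` on `C(K)` is order
continuous: it maps downward directed sets (nets) with infimum `0` to sets with
infimum `0`. -/
theorem stmt3 {K : Type*} [TopologicalSpace K] [CompactSpace K] [T2Space K]
    (φ : C(K, K))
    (hφ : ∀ U : Set K, IsClosed U → (interior U).Nonempty →
      (interior ((φ : K → K) '' U)).Nonempty) :
    ∀ D : Set C(K, ℝ), D.Nonempty → DirectedOn (fun f g => g ≤ f) D →
      IsGLB D 0 → IsGLB ((fun f : C(K, ℝ) => f.comp φ) '' D) 0 := by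
  intro D hD hdir hglb
  constructor
  · rintro _ ⟨f, hf, rfl⟩
    rw [ContinuousMap.le_def]
    intro x
    simpa using ContinuousMap.le_def.mp (hglb.1 hf) (φ x)
  · intro g hg
    by_contra hgle
    have : ∃ x, 0 < g x := by
      by_contra hc
      push_neg at hc
      exact hgle (ContinuousMap.le_def.mpr (by simpa using hc))
    obtain ⟨x₀, hx₀⟩ := this
    clear hgle
    set ε : ℝ := g x₀ with hε
    set V : Set K := {x | ε / 2 < g x} with hV
    have hVopen : IsOpen V := isOpen_lt continuous_const g.continuous
    have hx₀V : x₀ ∈ V := by simp [hV]; linarith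
    have hUint : (interior (closure V)).Nonempty :=
      ⟨x₀, interior_maximal subset_closure hVopen hx₀V⟩
    obtain ⟨y₀, hy₀⟩ := hφ (closure V) isClosed_closure hUint
    set W : Set K := interior ((φ : K → K) '' closure V) with hW
    have hdisj : Disjoint Wᶜ ({y₀} : Set K) :=
      Set.disjoint_singleton_right.mpr (by simpa using hy₀)
    obtain ⟨u, hu0, hu1, hum⟩ := exists_continuous_zero_one_of_isClosed
      (isClosed_compl_iff.mpr isOpen_interior) isClosed_singleton hdisj
    set h : C(K, ℝ) := (ε / 2) • u with hh
    have hεpos : 0 < ε / 2 := by linarith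
    -- closure V ⊆ {z | ε/2 ≤ g z}
    have hclo : closure V ⊆ {z | ε / 2 ≤ g z} := by
      apply closure_minimal
      · intro z hz
        simp only [hV, Set.mem_setOf_eq] at hz
        exact le_of_lt hz
      · exact isClosed_le continuous_const g.continuous
    have hlb : h ∈ lowerBounds D := by
      intro f hf
      rw [ContinuousMap.le_def]
      intro x
      by_cases hx : x ∈ W
      · have hx' : x ∈ (φ : K → K) '' closure V := interior_subset hx
        obtain ⟨z, hz, rfl⟩ := hx'
        have h1 : g z ≤ f (φ z) := by
          have := hg (Set.mem_image_of_mem _ hf)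
          simpa using ContinuousMap.le_def.mp this z
        have h2 : ε / 2 ≤ f (φ z) := le_trans (hclo hz) h1
        have h3 : u (φ z) ≤ 1 := (hum (φ z)).2
        have h4 : h (φ z) = ε / 2 * u (φ z) := by simp [hh]
        nlinarith [(hum (φ z)).1]
      · have : u x = 0 := hu0 hx
        have h4 : h x = ε / 2 * u x := by simp [hh]
        have h5 : (0 : ℝ) ≤ f x := by
          simpa using ContinuousMap.le_def.mp (hglb.1 hf) x
        rw [h4, this]; simpa using h5
    have hle := hglb.2 hlb
    have := ContinuousMap.le_def.mp hle y₀
    have huy : u y₀ = 1 := hu1 rfl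
    simp [hh, huy] at this
    linarith
end

section
/- Let $X = \{x \in C[0,1] : x(0) = x(1)\}$, let $\alpha \in (0,1)$ be irrational, and let $l \in X$ satisfy $l(1/2) = 0$ and $l(t) > 0$ for $t \neq 1/2$. Then the weighted composition operator $B$ on $X$ defined by $(Bx)(t) = l(t)\, x(t \dotplus \alpha)$ (addition mod 1) is band irreducible: there is no band $\mathfrak{B}$ in $X$ with $\{0\} \neq \mathfrak{B} \neq X$ and $B\mathfrak{B} \subseteq \mathfrak{B}$. -/
open Set Filter

section Aux
open AddSubgroup


lemma norm_coe_small' {r : ℝ} (h0 : 0 ≤ r) (h1 : r < 1/2) :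
    ‖((r : ℝ) : AddCircle (1:ℝ))‖ = r := by
  rw [AddCircle.norm_eq]
  have : round ((1:ℝ)⁻¹ * r) = 0 := by
    rw [round_eq_zero_iff]
    constructor <;> simp <;> linarith
  rw [this]
  simp [abs_of_nonneg h0]

lemma exists_small' (ε : ℝ) (hε : 0 < ε) :
    ∃ z : AddCircle (1:ℝ), z ≠ 0 ∧ ‖z‖ < ε := by
  set r := min ε 1 / 3 with hr
  have h0 : 0 < r := by rw [hr]; positivity
  have h1 : r < 1/2 := by
    have := min_le_right ε 1; rw [hr]; linarith
  refine ⟨((r : ℝ) : AddCircle (1:ℝ)), ?_, ?_⟩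
  · intro h
    have := norm_coe_small' h0.le h1
    rw [h, norm_zero] at this
    linarith
  · rw [norm_coe_small' h0.le h1]
    have := min_le_left ε 1; rw [hr]; linarith

lemma dense_zsmul' {β : ℝ} (hβ : Irrational β) (t : AddCircle (1:ℝ)) :
    Dense {y : AddCircle (1:ℝ) | ∃ k : ℤ, y = t + k • ((β : ℝ) : AddCircle (1:ℝ))} := by
  set b : AddCircle (1:ℝ) := ((β : ℝ) : AddCircle (1:ℝ)) with hb
  -- the subgroup generated by β and 1 is dense in ℝ
  set S : AddSubgroup ℝ := AddSubgroup.closure {β, 1} with hS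
  have hdense : Dense (S : Set ℝ) := by
    rcases S.dense_or_cyclic with h | ⟨r, hr⟩
    · exact h
    · exfalso
      have h1 : (1:ℝ) ∈ S := AddSubgroup.subset_closure (by simp)
      have hβS : β ∈ S := AddSubgroup.subset_closure (by simp)
      rw [hr, AddSubgroup.mem_closure_singleton] at h1 hβS
      obtain ⟨m, hm⟩ := h1
      obtain ⟨k, hk⟩ := hβS
      rw [zsmul_eq_mul] at hm hk
      have hm0 : (m:ℝ) ≠ 0 := by
        intro h; rw [h, zero_mul] at hm; exact one_ne_zero hm.symm
      apply hβ
      refine ⟨(k : ℚ) / (m : ℚ), ?_⟩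
      push_cast
      rw [div_eq_iff hm0, ← hk]
      have h2 : (k:ℝ) * r * (m:ℝ) = (k:ℝ) * ((m:ℝ) * r) := by ring
      rw [h2, hm, mul_one]
  -- push to the circle
  let φ : ℝ →+ AddCircle (1:ℝ) := QuotientAddGroup.mk' (zmultiples (1:ℝ))
  have hφc : Continuous φ := continuous_quotient_mk'
  have hφs : Function.Surjective φ := QuotientAddGroup.mk'_surjective _
  have himg : Dense (φ '' (S : Set ℝ)) := hφs.denseRange.dense_image hφc hdense
  have hsub : (φ '' (S : Set ℝ)) ⊆ {y : AddCircle (1:ℝ) | ∃ k : ℤ, y = k • b} := by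
    rintro y ⟨x, hx, rfl⟩
    have : S ≤ AddSubgroup.comap φ (zmultiples b) := by
      rw [hS, AddSubgroup.closure_le]
      rintro z (rfl | rfl)
      · exact mem_zmultiples b
      · show φ 1 ∈ zmultiples b
        have : φ 1 = 0 := (QuotientAddGroup.eq_zero_iff _).mpr (mem_zmultiples (1:ℝ))
        rw [this]; exact zero_mem _
    obtain ⟨k, hk⟩ := AddSubgroup.mem_zmultiples_iff.mp (this hx)
    exact ⟨k, hk.symm⟩
  have h0 : Dense {y : AddCircle (1:ℝ) | ∃ k : ℤ, y = k • b} := himg.mono hsub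
  -- translate
  have htr : Dense ((t + ·) '' {y : AddCircle (1:ℝ) | ∃ k : ℤ, y = k • b}) := by
    have : Function.Surjective (t + · : AddCircle (1:ℝ) → AddCircle (1:ℝ)) :=
      fun z => ⟨z - t, by simp⟩
    exact this.denseRange.dense_image (continuous_const.add continuous_id) h0
  refine htr.mono ?_
  rintro y ⟨z, ⟨k, rfl⟩, rfl⟩
  exact ⟨k, rfl⟩

-- small positive steps
lemma exists_pos_step' {β : ℝ} (hβ : Irrational β) {δ : ℝ} (hδ : 0 < δ) :
    ∃ n : ℕ, 0 < n ∧ ‖(n : ℤ) • ((β : ℝ) : AddCircle (1:ℝ))‖ < δ := by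
  set b : AddCircle (1:ℝ) := ((β : ℝ) : AddCircle (1:ℝ)) with hb
  set r : ℝ := min δ 1 / 3 with hr
  have h0 : 0 < r := by rw [hr]; positivity
  have h1 : r < 1/2 := by have := min_le_right δ 1; rw [hr]; linarith
  have hrδ : 3 * r ≤ δ := by have := min_le_left δ 1; rw [hr]; linarith
  set z : AddCircle (1:ℝ) := ((r : ℝ) : AddCircle (1:ℝ)) with hz
  have hzn : ‖z‖ = r := norm_coe_small' h0.le h1
  have hd := dense_zsmul' hβ (0 : AddCircle (1:ℝ))
  rw [Metric.dense_iff] at hd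
  obtain ⟨y, hy1, k, hy2⟩ := hd z (r/2) (by linarith)
  rw [hy2, zero_add] at hy1
  rw [Metric.mem_ball] at hy1
  -- hy1 : dist (k • b) z < r/2
  have hub : ‖k • b‖ < δ := by
    calc ‖k • b‖ ≤ dist (k • b) z + ‖z‖ := by
          rw [dist_eq_norm]
          simpa using norm_sub_norm_le (k • b) z |>.trans_eq rfl |>.trans (le_refl _) |>.trans (le_refl _)
      _ < δ := by rw [hzn]; linarith
  have hlb : k • b ≠ 0 := by
    intro h
    rw [h] at hy1
    rw [dist_comm, dist_zero_right, hzn] at hy1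
    linarith
  have hk0 : k ≠ 0 := by rintro rfl; simp at hlb
  refine ⟨k.natAbs, Int.natAbs_pos.mpr hk0, ?_⟩
  rcases Int.natAbs_eq k with h | h
  · rw [← h]; exact hub
  · have : ((k.natAbs : ℤ)) • b = -(k • b) := by
      rw [← neg_zsmul]; congr 1; omega
    rw [this, norm_neg]; exact hub

lemma dense_nsmul' {β : ℝ} (hβ : Irrational β) (t : AddCircle (1:ℝ)) :
    Dense {y : AddCircle (1:ℝ) | ∃ n : ℕ, y = t + (n : ℤ) • ((β : ℝ) : AddCircle (1:ℝ))} := by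
  set b : AddCircle (1:ℝ) := ((β : ℝ) : AddCircle (1:ℝ)) with hb
  rw [Metric.dense_iff]
  intro x ε hε
  have hd := dense_zsmul' hβ t
  rw [Metric.dense_iff] at hd
  obtain ⟨y, hy1, k, rfl⟩ := hd x (ε/2) (by linarith)
  rw [Metric.mem_ball] at hy1
  rcases le_or_gt 0 k with hk | hk
  · refine ⟨t + k • b, ?_, k.toNat, by rw [Int.toNat_of_nonneg hk]⟩
    rw [Metric.mem_ball]; linarith
  · have hka : 1 ≤ k.natAbs := by omega
    obtain ⟨n₀, hn₀pos, hn₀⟩ := exists_pos_step' hβ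
      (show (0:ℝ) < ε / (2 * k.natAbs) by positivity)
    set M : ℕ := k.natAbs * n₀ with hM
    have hMk : (0:ℤ) ≤ k + M := by
      have : (k.natAbs : ℤ) ≤ (M:ℤ) := by
        rw [hM]; push_cast; nlinarith [hn₀pos, (Int.natAbs_pos.mpr (by omega : k ≠ 0))]
      omega
    refine ⟨t + ((k + M).toNat : ℤ) • b, ?_, (k + M).toNat, rfl⟩
    rw [Int.toNat_of_nonneg hMk, Metric.mem_ball]
    have hsplit : t + (k + (M:ℤ)) • b = (t + k • b) + (M:ℤ) • b := by
      rw [add_zsmul, ← add_assoc]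
    have hnorm : ‖((M:ℤ)) • b‖ ≤ (k.natAbs : ℝ) * ‖((n₀:ℤ)) • b‖ := by
      have : ((M:ℤ)) • b = k.natAbs • ((n₀:ℤ) • b) := by
        rw [natCast_zsmul, natCast_zsmul, hM, mul_nsmul']
      rw [this]
      exact norm_nsmul_le
    have hd2 : dist (t + (k + (M:ℤ)) • b) x ≤ dist (t + k • b) x + ‖((M:ℤ)) • b‖ := by
      rw [hsplit]
      calc dist ((t + k • b) + (M:ℤ) • b) x
          ≤ dist ((t + k • b) + (M:ℤ) • b) (t + k • b) + dist (t + k • b) x := dist_triangle _ _ _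
        _ = ‖((M:ℤ)) • b‖ + dist (t + k • b) x := by
            rw [dist_eq_norm]; congr 1; abel_nf
        _ = _ := by ring
    have hfin : (k.natAbs : ℝ) * ‖((n₀:ℤ)) • b‖ < ε / 2 := by
      have h2 : (k.natAbs : ℝ) * ‖((n₀:ℤ)) • b‖ < (k.natAbs : ℝ) * (ε / (2 * k.natAbs)) := by
        apply mul_lt_mul_of_pos_left hn₀ (by positivity)
      have h3 : (k.natAbs : ℝ) * (ε / (2 * k.natAbs)) = ε / 2 := by
        field_simp
      linarith
    calc dist (t + (k + (M:ℤ)) • b) x ≤ dist (t + k • b) x + ‖((M:ℤ)) • b‖ := hd2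
      _ < ε/2 + ε/2 := by have := hnorm.trans_lt hfin; linarith
      _ = ε := by ring


end Aux

/-- The weighted rotation operator `(Bx)(t) = l(t) x(t + α)` on the lattice of
continuous functions on the circle (i.e. `{x ∈ C[0,1] : x 0 = x 1}`), with `α`
irrational and `l` vanishing only at `1/2`, is band irreducible. -/
theorem stmt4 (α : ℝ) (hirr : Irrational α) (hα0 : 0 < α) (hα1 : α < 1)
    (l : C(AddCircle (1 : ℝ), ℝ))
    (hl0 : l ((1 / 2 : ℝ) : AddCircle (1 : ℝ)) = 0)
    (hlpos : ∀ t : AddCircle (1 : ℝ), t ≠ ((1 / 2 : ℝ) : AddCircle (1 : ℝ)) → 0 < l t)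
    (B : C(AddCircle (1 : ℝ), ℝ) →L[ℝ] C(AddCircle (1 : ℝ), ℝ))
    (hB : ∀ (x : C(AddCircle (1 : ℝ), ℝ)) (t : AddCircle (1 : ℝ)),
      B x t = l t * x (t + ((α : ℝ) : AddCircle (1 : ℝ)))) :
    ¬ ∃ 𝔅 : Submodule ℝ C(AddCircle (1 : ℝ), ℝ),
        (∀ x ∈ 𝔅, ∀ y : C(AddCircle (1 : ℝ), ℝ), |y| ≤ |x| → y ∈ 𝔅) ∧
        (∀ y : C(AddCircle (1 : ℝ), ℝ),
          (∀ w : C(AddCircle (1 : ℝ), ℝ),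
            (∀ v ∈ 𝔅, |w| ⊓ |v| = 0) → |y| ⊓ |w| = 0) → y ∈ 𝔅) ∧
        𝔅 ≠ ⊥ ∧ 𝔅 ≠ ⊤ ∧ (∀ x ∈ 𝔅, B x ∈ 𝔅) := by
  rintro ⟨𝔅, _hideal, hband, hbot, htop, hinv⟩
  set a : AddCircle (1:ℝ) := ((α : ℝ) : AddCircle (1:ℝ)) with ha
  set h2 : AddCircle (1:ℝ) := ((1/2 : ℝ) : AddCircle (1:ℝ)) with hh2
  set S : Set (AddCircle (1:ℝ)) := {t | ∃ v ∈ 𝔅, v t ≠ 0} with hSdef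
  -- S is open
  have hSopen : IsOpen S := by
    rw [isOpen_iff_forall_mem_open]
    rintro t ⟨v, hv, hvt⟩
    exact ⟨{s | v s ≠ 0}, fun s hs => ⟨v, hv, hs⟩,
      isOpen_compl_singleton.preimage v.continuous, hvt⟩
  -- S is nonempty
  have hSne : S.Nonempty := by
    obtain ⟨v, hv𝔅, hvne⟩ := (Submodule.ne_bot_iff 𝔅).1 hbot
    rcases em (∃ t, v t ≠ 0) with ⟨t, ht⟩ | h
    · exact ⟨t, v, hv𝔅, ht⟩
    · push_neg at h
      exact absurd (ContinuousMap.ext fun t => by simpa using h t) hvne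
  -- one-step invariance
  have hstep : ∀ t ∈ S, t - a ≠ h2 → t - a ∈ S := by
    rintro t ⟨v, hv, hvt⟩ hne
    refine ⟨B v, hinv v hv, ?_⟩
    rw [hB]
    have hta : t - a + a = t := by abel
    rw [hta]
    exact mul_ne_zero (ne_of_gt (hlpos _ hne)) hvt
  -- closure of S is invariant under subtraction of a
  have hC : ∀ x ∈ closure S, x - a ∈ closure S := by
    intro x hx
    rw [Metric.mem_closure_iff] at hx ⊢
    intro ε hε
    obtain ⟨y, hyS, hxy⟩ := hx (ε/2) (by linarith)
    by_cases hcase : y - a = h2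
    · obtain ⟨δ, hδ, hball⟩ := Metric.isOpen_iff.1 hSopen y hyS
      obtain ⟨z, hz0, hzn⟩ := exists_small' (min δ (ε/2)) (lt_min hδ (by linarith))
      have hdyz : dist (y + z) y = ‖z‖ := by
        rw [dist_eq_norm]; congr 1; abel
      have hy'S : y + z ∈ S := by
        apply hball
        rw [Metric.mem_ball, hdyz]
        exact hzn.trans_le (min_le_left _ _)
      have hy'ne : (y + z) - a ≠ h2 := by
        intro h
        apply hz0
        have heq : (y + z) - a = y - a := by rw [h, hcase]
        have heq2 : y + z = y := sub_left_inj.mp heq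
        exact add_eq_left.mp heq2
      refine ⟨(y + z) - a, hstep _ hy'S hy'ne, ?_⟩
      have : dist (x - a) ((y + z) - a) = dist x (y + z) := by
        simp [dist_eq_norm]
      rw [this]
      calc dist x (y + z) ≤ dist x y + dist y (y + z) := dist_triangle _ _ _
        _ < ε/2 + ‖z‖ := by rw [dist_comm y (y+z), hdyz]; linarith
        _ < ε/2 + ε/2 := by have := hzn.trans_le (min_le_right δ (ε/2)); linarith
        _ = ε := by ring
    · refine ⟨y - a, hstep y hyS hcase, ?_⟩
      have : dist (x - a) (y - a) = dist x y := by
        simp [dist_eq_norm]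
      rw [this]; linarith
  -- S is dense
  have hdense : Dense S := by
    obtain ⟨t₀, ht₀⟩ := hSne
    have horb : ∀ n : ℕ, t₀ + (n : ℤ) • (((-α : ℝ)) : AddCircle (1:ℝ)) ∈ closure S := by
      have hneg : (((-α : ℝ)) : AddCircle (1:ℝ)) = -a := by
        rw [ha]; push_cast; ring_nf; rfl
      intro n
      induction n with
      | zero => simpa using subset_closure ht₀
      | succ n ih =>
          have : t₀ + ((n+1 : ℕ) : ℤ) • (((-α : ℝ)) : AddCircle (1:ℝ))
              = (t₀ + (n : ℤ) • (((-α : ℝ)) : AddCircle (1:ℝ))) - a := by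
            rw [hneg]
            push_cast
            rw [add_zsmul, one_zsmul, sub_eq_add_neg]
            abel
          rw [this]
          exact hC _ ih
    have hd := dense_nsmul' hirr.neg t₀
    have hsub : {y : AddCircle (1:ℝ) | ∃ n : ℕ, y = t₀ + (n : ℤ) • (((-α : ℝ)) : AddCircle (1:ℝ))}
        ⊆ closure S := by rintro y ⟨n, rfl⟩; exact horb n
    have : Dense (closure S) := hd.mono hsub
    rwa [dense_closure] at this
  -- any w disjoint from 𝔅 is zero
  have hw0 : ∀ w : C(AddCircle (1:ℝ), ℝ), (∀ v ∈ 𝔅, |w| ⊓ |v| = 0) → w = 0 := by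
    intro w hw
    have hz : ∀ t ∈ S, w t = 0 := by
      rintro t ⟨v, hv, hvt⟩
      have h1 := congrArg (fun f : C(AddCircle (1:ℝ), ℝ) => f t) (hw v hv)
      simp only [ContinuousMap.inf_apply, ContinuousMap.abs_apply,
        ContinuousMap.zero_apply] at h1
      by_contra hwt
      have : (0:ℝ) < |w t| ⊓ |v t| := lt_min (abs_pos.2 hwt) (abs_pos.2 hvt)
      rw [h1] at this
      exact lt_irrefl _ this
    have hclosed : closure S ⊆ {t | w t = 0} :=
      closure_minimal hz (isClosed_eq w.continuous continuous_const)
    ext t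
    simpa using hclosed (hdense t)
  -- hence 𝔅 = ⊤
  apply htop
  rw [Submodule.eq_top_iff']
  intro y
  apply hband
  intro w hw
  rw [hw0 w hw]
  ext t
  simp only [ContinuousMap.inf_apply, ContinuousMap.abs_apply, ContinuousMap.zero_apply, abs_zero]
  exact min_eq_right (abs_nonneg _)
end

section
/- Let $X = \{x \in C[0,1] : x(0) = x(1)\}$, $\alpha \in (0,1)$ irrational, and $l(t) = e^{-1/(t-1/2)^2}$ for $t \neq 1/2$, $l(1/2) = 0$. Let $(Bx)(t) = l(t)x(t \dotplus \alpha)$ and $(Ax)(t) = x(1/2)$, and $C = A + B$. If $z \in X$ satisfies $Cz = rz$ for some real $r > 1$, then $z = 0$, assuming $B$ is quasinilpotent. -/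
/-- In the perturbed rotation example: `X = {x ∈ C[0,1] : x 0 = x 1}` (modelled as
continuous functions on the circle `ℝ/ℤ`), `l(t) = exp(-1/(t-1/2)²)` with
`l(1/2) = 0`, `(Bx)(t) = l(t) x(t + α)`, `(Ax)(t) = x(1/2)`, `C = A + B`.
Assuming `B` is quasinilpotent, any eigenvector of `C` for an eigenvalue `r > 1`
is zero. -/
theorem stmt5 (α : ℝ) (hirr : Irrational α) (hα0 : 0 < α) (hα1 : α < 1)
    (l : C(AddCircle (1 : ℝ), ℝ))
    (hl : ∀ s : ℝ, 0 ≤ s → s < 1 →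
      l ((s : ℝ) : AddCircle (1 : ℝ)) =
        if s = 1 / 2 then 0 else Real.exp (-((s - 1 / 2) ^ 2)⁻¹))
    (A B : C(AddCircle (1 : ℝ), ℝ) →L[ℝ] C(AddCircle (1 : ℝ), ℝ))
    (hA : ∀ (x : C(AddCircle (1 : ℝ), ℝ)) (t : AddCircle (1 : ℝ)),
      A x t = x (((1 / 2 : ℝ) : AddCircle (1 : ℝ))))
    (hB : ∀ (x : C(AddCircle (1 : ℝ), ℝ)) (t : AddCircle (1 : ℝ)),
      B x t = l t * x (t + ((α : ℝ) : AddCircle (1 : ℝ))))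
    (hqn : spectralRadius ℝ B = 0)
    (r : ℝ) (hr : 1 < r) (z : C(AddCircle (1 : ℝ), ℝ))
    (hz : (A + B) z = r • z) :
    z = 0 := by
  -- l(1/2) = 0
  have hl2 : l (((1 / 2 : ℝ) : AddCircle (1 : ℝ))) = 0 := by
    have := hl (1/2) (by norm_num) (by norm_num)
    simpa using this
  -- evaluate the eigen-equation at 1/2 to get z(1/2) = 0
  have hzhalf : z (((1 / 2 : ℝ) : AddCircle (1 : ℝ))) = 0 := by
    have h := congrFun (congrArg (fun f : C(AddCircle (1:ℝ), ℝ) => (f : AddCircle (1:ℝ) → ℝ)) hz)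
      (((1 / 2 : ℝ) : AddCircle (1 : ℝ)))
    have : A z (((1 / 2 : ℝ) : AddCircle (1 : ℝ))) + B z (((1 / 2 : ℝ) : AddCircle (1 : ℝ)))
        = r * z (((1 / 2 : ℝ) : AddCircle (1 : ℝ))) := by
      simpa using h
    rw [hA, hB, hl2] at this
    have hr1 : r - 1 ≠ 0 := by nlinarith
    nlinarith [this]
  -- hence (r • 1 - B) z = 0
  have hBz : B z = r • z := by
    ext t
    have h := congrFun (congrArg (fun f : C(AddCircle (1:ℝ), ℝ) => (f : AddCircle (1:ℝ) → ℝ)) hz) t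
    have h' : A z t + B z t = r * z t := by simpa using h
    rw [hA, hzhalf] at h'
    simpa using h'
  -- r is not in the spectrum of B since the spectral radius is 0
  have hnotmem : r ∉ spectrum ℝ B := by
    intro hmem
    have hle : (‖r‖₊ : ENNReal) ≤ spectralRadius ℝ B := le_iSup₂ (α := ENNReal) r hmem
    rw [hqn] at hle
    have : ‖r‖₊ = 0 := by simpa using hle
    have : r = 0 := by simpa using this
    linarith
  have hunit : IsUnit (algebraMap ℝ (C(AddCircle (1:ℝ), ℝ) →L[ℝ] C(AddCircle (1:ℝ), ℝ)) r - B) := by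
    simpa [spectrum.mem_iff, not_not] using hnotmem
  obtain ⟨u, hu⟩ := hunit
  have hzero : (algebraMap ℝ (C(AddCircle (1:ℝ), ℝ) →L[ℝ] C(AddCircle (1:ℝ), ℝ)) r - B) z = 0 := by
    rw [Algebra.algebraMap_eq_smul_one]
    simp [ContinuousLinearMap.sub_apply, hBz]
  have huz : (↑u : C(AddCircle (1:ℝ), ℝ) →L[ℝ] C(AddCircle (1:ℝ), ℝ)) z = 0 := by
    rw [hu]; exact hzero
  have : ((↑u⁻¹ * ↑u : C(AddCircle (1:ℝ), ℝ) →L[ℝ] C(AddCircle (1:ℝ), ℝ))) z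
      = (↑u⁻¹ : C(AddCircle (1:ℝ), ℝ) →L[ℝ] C(AddCircle (1:ℝ), ℝ))
        ((↑u : C(AddCircle (1:ℝ), ℝ) →L[ℝ] C(AddCircle (1:ℝ), ℝ)) z) := rfl
  rw [u.inv_mul] at this
  simpa [huz] using this
end

section
/- With $X$, $A$, $B$, $C = A + B$ as in the perturbed rotation example, suppose $f, g \in X$ are eigenvectors of $C$ with eigenvalue $1$ and $B$ is quasinilpotent. Then $f$ and $g$ are linearly dependent. (If $f(1/2) = g(1/2)$ then $B(f-g) = f-g$, forcing $f = g$ since $B$ is quasinilpotent.) -/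
set_option maxHeartbeats 1000000


/-- In the perturbed rotation example `C = A + B`, with `B` quasinilpotent, any
two eigenvectors of `C` with eigenvalue `1` are linearly dependent. -/
theorem stmt6 (α : ℝ) (hirr : Irrational α) (hα0 : 0 < α) (hα1 : α < 1)
    (l : C(AddCircle (1 : ℝ), ℝ))
    (hl0 : l ((1 / 2 : ℝ) : AddCircle (1 : ℝ)) = 0)
    (A B : C(AddCircle (1 : ℝ), ℝ) →L[ℝ] C(AddCircle (1 : ℝ), ℝ))
    (hA : ∀ (x : C(AddCircle (1 : ℝ), ℝ)) (t : AddCircle (1 : ℝ)),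
      A x t = x (((1 / 2 : ℝ) : AddCircle (1 : ℝ))))
    (hB : ∀ (x : C(AddCircle (1 : ℝ), ℝ)) (t : AddCircle (1 : ℝ)),
      B x t = l t * x (t + ((α : ℝ) : AddCircle (1 : ℝ))))
    (hqn : spectralRadius ℝ B = 0)
    (f g : C(AddCircle (1 : ℝ), ℝ))
    (hf : (A + B) f = f) (hg : (A + B) g = g) :
    ¬ LinearIndependent ℝ ![f, g] := by
  haveI : Fact ((0:ℝ) < 1) := ⟨one_pos⟩
  -- `B` quasinilpotent, so `1 - B` is a unit.
  have hunit : IsUnit ((1 : C(AddCircle (1 : ℝ), ℝ) →L[ℝ] C(AddCircle (1 : ℝ), ℝ)) - B) := by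
    have h := spectrum.isUnit_one_sub_smul_of_lt_inv_radius (a := B) (z := (1 : ℝ))
      (by rw [hqn]; norm_num)
    simpa using h
  -- key: any fixed point of `A + B` vanishing at 1/2 is zero
  have key : ∀ h : C(AddCircle (1 : ℝ), ℝ), (A + B) h = h →
      h (((1 / 2 : ℝ) : AddCircle (1 : ℝ))) = 0 → h = 0 := by
    intro h hfix h0
    have hBh : B h = h := by
      ext t
      have := congrArg (fun u => u t) hfix
      simp only [ContinuousLinearMap.add_apply, ContinuousMap.add_apply] at this
      rw [hA h t, h0, zero_add] at this
      exact this
    have : ((1 : C(AddCircle (1 : ℝ), ℝ) →L[ℝ] C(AddCircle (1 : ℝ), ℝ)) - B) h = 0 := by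
      simp [ContinuousLinearMap.sub_apply, hBh]
    obtain ⟨u, hu⟩ := hunit
    have h1 : h = (↑u⁻¹ : C(AddCircle (1 : ℝ), ℝ) →L[ℝ] C(AddCircle (1 : ℝ), ℝ))
        ((1 - B) h) := by
      rw [← hu, ← ContinuousLinearMap.mul_apply, u.inv_mul]
      simp
    rw [h1, this]
    simp
  intro hli
  rw [linearIndependent_fin2] at hli
  obtain ⟨hg0, hlin⟩ := hli
  simp only [Matrix.cons_val_zero, Matrix.cons_val_one, Matrix.head_cons] at hg0 hlin
  by_cases hgc : g (((1 / 2 : ℝ) : AddCircle (1 : ℝ))) = 0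
  · exact hg0 (key g hg hgc)
  · set c₁ := g (((1 / 2 : ℝ) : AddCircle (1 : ℝ)))
    set c₂ := f (((1 / 2 : ℝ) : AddCircle (1 : ℝ)))
    have hh : (A + B) (c₁ • f - c₂ • g) = c₁ • f - c₂ • g := by
      simp [map_sub, map_smul, hf, hg]
    have hh0 : (c₁ • f - c₂ • g) (((1 / 2 : ℝ) : AddCircle (1 : ℝ))) = 0 := by
      simp [c₁, c₂, mul_comm]
    have hz := key _ hh hh0
    have heq : c₁ • f = c₂ • g := sub_eq_zero.mp hz
    have : (c₂ / c₁) • g = f := by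
      have : (c₁⁻¹ * c₁) • f = c₁⁻¹ • (c₂ • g) := by
        rw [mul_smul, heq]
      rw [inv_mul_cancel₀ hgc, one_smul] at this
      rw [this, smul_smul, div_eq_inv_mul]
    exact hlin _ this
end

section
/- With $X$, $A$, $B$, $C = A+B$ as in the perturbed rotation example and $B$ quasinilpotent, suppose $f \in X$ is a nonzero eigenvector of $C$ with eigenvalue $1$ and $h \in X$ satisfies $(I - C)h = f$. Then a contradiction follows; i.e., $1$ has no root vectors: there is no $h$ with $(I-C)h = f$ for nonzero $f \in \ker(I - C)$. -/
/-- In the perturbed rotation example `C = A + B`, with `B` quasinilpotent, the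
eigenvalue `1` of `C` admits no root vectors: there is no `h` with
`(I - C) h = f` for a nonzero eigenvector `f ∈ ker (I - C)`. -/
theorem stmt7 (α : ℝ) (hirr : Irrational α) (hα0 : 0 < α) (hα1 : α < 1)
    (l : C(AddCircle (1 : ℝ), ℝ))
    (hl0 : l ((1 / 2 : ℝ) : AddCircle (1 : ℝ)) = 0)
    (hlpos : ∀ t : AddCircle (1 : ℝ), t ≠ ((1 / 2 : ℝ) : AddCircle (1 : ℝ)) → 0 < l t)
    (A B : C(AddCircle (1 : ℝ), ℝ) →L[ℝ] C(AddCircle (1 : ℝ), ℝ))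
    (hA : ∀ (x : C(AddCircle (1 : ℝ), ℝ)) (t : AddCircle (1 : ℝ)),
      A x t = x (((1 / 2 : ℝ) : AddCircle (1 : ℝ))))
    (hB : ∀ (x : C(AddCircle (1 : ℝ), ℝ)) (t : AddCircle (1 : ℝ)),
      B x t = l t * x (t + ((α : ℝ) : AddCircle (1 : ℝ))))
    (hqn : spectralRadius ℝ B = 0)
    (f : C(AddCircle (1 : ℝ), ℝ)) (hf0 : f ≠ 0) (hf : (A + B) f = f)
    (h : C(AddCircle (1 : ℝ), ℝ)) (hroot : h - (A + B) h = f) :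
    False := by
  set p : AddCircle (1 : ℝ) := ((1 / 2 : ℝ) : AddCircle (1 : ℝ)) with hp
  -- f (1/2) = 0
  have hfp : f p = 0 := by
    have := congrArg (fun g : C(AddCircle (1 : ℝ), ℝ) => g p) hroot
    simp only [ContinuousMap.sub_apply, ContinuousLinearMap.add_apply,
      ContinuousMap.add_apply, hA, hB, hl0] at this
    linarith
  -- B f = f
  have hBf : B f = f := by
    ext t
    have := congrArg (fun g : C(AddCircle (1 : ℝ), ℝ) => g t) hf
    simp only [ContinuousLinearMap.add_apply, ContinuousMap.add_apply, hA, hB] at this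
    rw [hB]
    rw [hfp] at this
    linarith
  -- 1 ∈ spectrum ℝ B
  have hmem : (1 : ℝ) ∈ spectrum ℝ B := by
    rw [spectrum.mem_iff]
    rintro ⟨u, hu⟩
    have h1 : (algebraMap ℝ (C(AddCircle (1 : ℝ), ℝ) →L[ℝ] C(AddCircle (1 : ℝ), ℝ)) 1 - B) f = 0 := by
      simp [ContinuousLinearMap.sub_apply, Algebra.algebraMap_eq_smul_one, hBf]
    have h2 : u.val f = 0 := by rw [hu]; exact h1
    have h3 : u.inv (u.val f) = f := by
      rw [← ContinuousLinearMap.mul_apply, u.inv_val]; rfl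
    rw [h2] at h3
    simp at h3
    exact hf0 h3.symm
  have hle : (1 : ENNReal) ≤ spectralRadius ℝ B := by
    have := le_iSup₂ (f := fun k (_ : k ∈ spectrum ℝ B) => (‖k‖₊ : ENNReal)) 1 hmem
    simpa [spectralRadius] using this
  rw [hqn] at hle
  exact absurd hle (by norm_num)
end

section
/- Let $\varphi : [0,2] \to [0,2]$ be defined by $\varphi(t) = \psi(t)$ for $t \in [0,1]$ and $\varphi(t) = \psi(2-t)$ for $t \in [1,2]$, where $\psi$ is the iterated tent map. Then for every $n \geq 1$, $0$ is the unique fixed point of $\varphi^n$ (the $n$-th iterate of $\varphi$). -/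
/-- The tent map on `[0,1]`. -/
noncomputable def psi0 (t : ℝ) : ℝ := if t ≤ 1 / 2 then 2 * t else 2 - 2 * t

/-- The iterated tent map `ψ : [0,1] → [0,1]`: `ψ 0 = 0` and
`ψ t = 2⁻ⁿ ψ₀(2ⁿ t - 1)` for `t ∈ [2⁻ⁿ, 2⁻ⁿ⁺¹]` (here `n = -⌊log₂ t⌋`). -/
noncomputable def psi (t : ℝ) : ℝ :=
  if t ≤ 0 then 0
  else (2 : ℝ) ^ (⌊Real.logb 2 t⌋) * psi0 ((2 : ℝ) ^ (-⌊Real.logb 2 t⌋) * t - 1)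

/-- The map `φ : [0,2] → [0,2]`, `φ t = ψ t` on `[0,1]` and `φ t = ψ (2 - t)` on
`[1,2]`. -/
noncomputable def phi (t : ℝ) : ℝ := if t ≤ 1 then psi t else psi (2 - t)

lemma psi_bounds {t : ℝ} (ht : 0 < t) : 0 ≤ psi t ∧ psi t < t := by
  set n : ℤ := ⌊Real.logb 2 t⌋ with hn
  have hlog : (2 : ℝ) ^ (Real.logb 2 t) = t := Real.rpow_logb (by norm_num) (by norm_num) ht
  have h1 : (2 : ℝ) ^ n ≤ t := by
    calc (2 : ℝ) ^ n = (2 : ℝ) ^ ((n : ℝ)) := by rw [Real.rpow_intCast]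
    _ ≤ (2 : ℝ) ^ (Real.logb 2 t) :=
        Real.rpow_le_rpow_of_exponent_le one_le_two (Int.floor_le _)
    _ = t := hlog
  have h2 : t < (2 : ℝ) ^ (n + 1) := by
    calc t = (2 : ℝ) ^ (Real.logb 2 t) := hlog.symm
    _ < (2 : ℝ) ^ (((n : ℝ) + 1)) := by
        apply Real.rpow_lt_rpow_of_exponent_lt one_lt_two
        have := Int.lt_floor_add_one (Real.logb 2 t)
        push_cast
        linarith
    _ = (2 : ℝ) ^ (n + 1) := by
        rw [← Real.rpow_intCast (2 : ℝ) (n + 1)]; push_cast; ring_nf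
  have hp : (0 : ℝ) < (2 : ℝ) ^ n := zpow_pos (by norm_num) n
  have h2' : t < 2 * (2 : ℝ) ^ n := by
    have : (2 : ℝ) ^ (n + 1) = 2 * (2 : ℝ) ^ n := by
      rw [zpow_add₀ (by norm_num : (2:ℝ) ≠ 0)]; ring
    linarith [this ▸ h2]
  have hneg : (2 : ℝ) ^ (-n) = ((2 : ℝ) ^ n)⁻¹ := zpow_neg 2 n
  rw [psi, if_neg (not_le.mpr ht), ← hn, hneg]
  set p := (2 : ℝ) ^ n
  have hu1 : (1 : ℝ) ≤ p⁻¹ * t - 1 + 1 := by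
    rw [sub_add_cancel]
    have h3 : p⁻¹ * p ≤ p⁻¹ * t := mul_le_mul_of_nonneg_left h1 (inv_pos.mpr hp).le
    rw [inv_mul_cancel₀ hp.ne'] at h3
    exact h3
  have hu2 : p⁻¹ * t < 2 := by
    rw [inv_mul_lt_iff₀ hp]; linarith
  have hu1' : (1 : ℝ) ≤ p⁻¹ * t := by linarith [hu1]
  rw [psi0]
  split_ifs with h
  · constructor
    · exact mul_nonneg hp.le (by linarith)
    · have : 2 * (p⁻¹ * t - 1) < p⁻¹ * t := by linarith
      calc p * (2 * (p⁻¹ * t - 1)) < p * (p⁻¹ * t) := by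
            exact mul_lt_mul_of_pos_left this hp
      _ = t := by field_simp
  · push_neg at h
    constructor
    · have : 0 ≤ 2 - 2 * (p⁻¹ * t - 1) := by linarith
      positivity
    · have : 2 - 2 * (p⁻¹ * t - 1) < p⁻¹ * t := by linarith
      calc p * (2 - 2 * (p⁻¹ * t - 1)) < p * (p⁻¹ * t) := mul_lt_mul_of_pos_left this hp
      _ = t := by field_simp

lemma psi_zero : psi 0 = 0 := by simp [psi]

lemma phi_zero : phi 0 = 0 := by simp [phi, psi_zero]

lemma phi_bounds {t : ℝ} (ht : 0 < t) (ht2 : t ≤ 2) : 0 ≤ phi t ∧ phi t < t := by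
  rw [phi]
  split_ifs with h
  · exact psi_bounds ht
  · push_neg at h
    rcases le_or_gt (2 - t) 0 with h0 | h0
    · rw [psi, if_pos h0]; exact ⟨le_refl 0, ht⟩
    · obtain ⟨ha, hb⟩ := psi_bounds h0
      exact ⟨ha, by linarith⟩

lemma iter_lt {t : ℝ} (ht : 0 < t) (ht2 : t ≤ 2) :
    ∀ n : ℕ, 1 ≤ n → 0 ≤ phi^[n] t ∧ phi^[n] t < t := by
  intro n hn
  induction n with
  | zero => omega
  | succ m ih =>
    rcases Nat.eq_or_lt_of_le hn with h1 | h1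
    · obtain rfl : m = 0 := by omega
      simpa using phi_bounds ht ht2
    · have hm : 1 ≤ m := by omega
      obtain ⟨ha, hb⟩ := ih hm
      rw [Function.iterate_succ_apply']
      rcases eq_or_lt_of_le ha with h0 | h0
      · rw [← h0, phi_zero]; exact ⟨le_refl 0, ht⟩
      · obtain ⟨hc, hd⟩ := phi_bounds h0 (by linarith)
        exact ⟨hc, by linarith⟩

/-- For every `n ≥ 1`, `0` is the unique fixed point of `φⁿ` on `[0,2]`. -/
theorem stmt9 : ∀ n : ℕ, 1 ≤ n → ∀ t ∈ Set.Icc (0 : ℝ) 2,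
    (phi^[n] t = t ↔ t = 0) := by
  intro n hn t ht
  obtain ⟨ht0, ht2⟩ := ht
  constructor
  · intro hfix
    by_contra h
    have htpos : 0 < t := lt_of_le_of_ne ht0 (Ne.symm h)
    have := (iter_lt htpos ht2 n hn).2
    linarith [hfix ▸ this]
  · rintro rfl
    have : ∀ m : ℕ, phi^[m] (0 : ℝ) = 0 := by
      intro m
      induction m with
      | zero => simp
      | succ k ih => rw [Function.iterate_succ_apply', ih, phi_zero]
    exact this n
end

section
/- Let $\varphi : [0,2] \to [0,2]$ be the map from the construction. Then the set $E = \bigcup_{n=1}^\infty \varphi^{-n}(0)$ is dense in $[0,2]$. -/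
lemma psi0_mem {u : ℝ} (h0 : 0 ≤ u) (h1 : u ≤ 1) : psi0 u ∈ Set.Icc (0:ℝ) 1 := by
  unfold psi0
  split <;> constructor <;> linarith

lemma psi_one : psi 1 = 0 := by
  simp [psi, Real.logb_one, psi0]

lemma two_zpow_floor_logb_le {t : ℝ} (ht : 0 < t) :
    (2:ℝ) ^ (⌊Real.logb 2 t⌋) ≤ t := by
  have h1 : (2:ℝ) ^ ((⌊Real.logb 2 t⌋ : ℝ)) ≤ (2:ℝ) ^ (Real.logb 2 t) :=
    Real.rpow_le_rpow_of_exponent_le one_le_two (Int.floor_le _)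
  rw [Real.rpow_logb two_pos (by norm_num) ht] at h1
  rwa [Real.rpow_intCast] at h1

lemma lt_two_zpow_floor_logb {t : ℝ} (ht : 0 < t) :
    t < (2:ℝ) ^ (⌊Real.logb 2 t⌋ + 1) := by
  have h1 : (2:ℝ) ^ (Real.logb 2 t) < (2:ℝ) ^ ((⌊Real.logb 2 t⌋ + 1 : ℤ) : ℝ) :=
    Real.rpow_lt_rpow_of_exponent_lt one_lt_two (by push_cast; exact Int.lt_floor_add_one _)
  rw [Real.rpow_logb two_pos (by norm_num) ht, Real.rpow_intCast] at h1
  exact h1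

lemma psi_mem {t : ℝ} (ht : t ∈ Set.Icc (0:ℝ) 1) : psi t ∈ Set.Icc (0:ℝ) 1 := by
  rcases le_or_gt t 0 with h | h
  · simp [psi, h]
  · obtain ⟨_, ht1⟩ := ht
    set n := ⌊Real.logb 2 t⌋ with hn
    have hlow : (2:ℝ) ^ n ≤ t := two_zpow_floor_logb_le h
    have hhigh : t < (2:ℝ) ^ (n + 1) := lt_two_zpow_floor_logb h
    have hnpos : (0:ℝ) < (2:ℝ) ^ n := zpow_pos two_pos n
    have hu0 : 0 ≤ (2:ℝ) ^ (-n) * t - 1 := by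
      have : (1:ℝ) = (2:ℝ)^(-n) * (2:ℝ)^n := by
        rw [← zpow_add₀ (two_ne_zero)]; simp
      nlinarith [zpow_pos (show (0:ℝ) < 2 by norm_num) (-n)]
    have hu1 : (2:ℝ) ^ (-n) * t - 1 ≤ 1 := by
      have h2 : (2:ℝ) ^ (n+1) = 2 * (2:ℝ)^n := by
        rw [zpow_add₀ (two_ne_zero)]; ring
      have h3 : (2:ℝ)^(-n) * (2:ℝ)^n = 1 := by
        rw [← zpow_add₀ (two_ne_zero)]; simp
      nlinarith [zpow_pos (show (0:ℝ) < 2 by norm_num) (-n)]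
    have hpsi0 := psi0_mem hu0 hu1
    have hn1 : (2:ℝ) ^ n ≤ 1 := by
      have : n ≤ 0 := by
        have : Real.logb 2 t ≤ 0 := Real.logb_nonpos one_lt_two (le_of_lt h) ht1
        exact Int.floor_nonpos this
      exact zpow_le_one_of_nonpos₀ one_le_two this
    rw [psi, if_neg (not_le.2 h)]
    constructor
    · exact mul_nonneg hnpos.le hpsi0.1
    · calc (2:ℝ)^n * psi0 _ ≤ (2:ℝ)^n * 1 := by
            exact mul_le_mul_of_nonneg_left hpsi0.2 hnpos.le
        _ ≤ 1 := by rw [mul_one]; exact hn1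

lemma psi_half {t : ℝ} (ht : 0 ≤ t) : psi (t / 2) = psi t / 2 := by
  rcases eq_or_lt_of_le ht with h | h
  · rw [← h]; simp [psi_zero, psi]
  · have hlog : Real.logb 2 (t / 2) = Real.logb 2 t - 1 := by
      rw [Real.logb_div (ne_of_gt h) (by norm_num), Real.logb_self_eq_one] <;> norm_num
    rw [psi, psi, if_neg (not_le.2 h), if_neg (not_le.2 (by linarith : (0:ℝ) < t / 2)),
      hlog, Int.floor_sub_one]
    have h1 : (2:ℝ) ^ (⌊Real.logb 2 t⌋ - 1) = (2:ℝ) ^ ⌊Real.logb 2 t⌋ / 2 := by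
      rw [zpow_sub₀ (two_ne_zero)]; norm_num
    have h2 : (2:ℝ) ^ (-(⌊Real.logb 2 t⌋ - 1)) = (2:ℝ) ^ (-⌊Real.logb 2 t⌋) * 2 := by
      rw [neg_sub, sub_eq_add_neg, zpow_add₀ (two_ne_zero)]; ring
    rw [h1, h2]; ring_nf

lemma psi_iter_mem {t : ℝ} (ht : t ∈ Set.Icc (0:ℝ) 1) (k : ℕ) :
    psi^[k] t ∈ Set.Icc (0:ℝ) 1 := by
  induction k generalizing t with
  | zero => exact ht
  | succ k ih => rw [Function.iterate_succ_apply]; exact ih (psi_mem ht)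

lemma psi_half_iter {t : ℝ} (ht : t ∈ Set.Icc (0:ℝ) 1) (k : ℕ) :
    psi^[k] (t / 2) = psi^[k] t / 2 := by
  induction k generalizing t with
  | zero => simp
  | succ k ih =>
      rw [Function.iterate_succ_apply, Function.iterate_succ_apply,
        psi_half ht.1]
      exact ih (psi_mem ht)

lemma psi_iter_zero (k : ℕ) : psi^[k] 0 = 0 :=
  Function.iterate_fixed psi_zero k

lemma psi_mid {t : ℝ} (h1 : 1/2 < t) (h2 : t < 1) : psi t = psi0 (2 * t - 1) / 2 := by
  have hl : Real.logb 2 t < 0 := Real.logb_neg one_lt_two (by linarith) h2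
  have hl2 : (-1:ℝ) < Real.logb 2 t := by
    have := Real.logb_lt_logb (by norm_num : (1:ℝ) < 2) (by norm_num : (0:ℝ) < 1/2) h1
    simpa [Real.logb_self_eq_one, show Real.logb 2 (1/2) = -1 by
      rw [one_div, Real.logb_inv, Real.logb_self_eq_one] <;> norm_num] using this
  have hfl : ⌊Real.logb 2 t⌋ = -1 := by
    apply Int.floor_eq_iff.2
    constructor <;> push_cast <;> [linarith; linarith]
  rw [psi, if_neg (not_le.2 (by linarith : (0:ℝ) < t)), hfl]
  norm_num [mul_comm]; ring
lemma key : ∀ m : ℕ, ∀ p : ℕ, p ≤ 2 ^ m → psi^[m + 1] ((p : ℝ) / 2 ^ m) = 0 := by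
  intro m
  induction m with
  | zero =>
      intro p hp
      interval_cases p
      · simpa using psi_zero
      · simpa using psi_one
  | succ m ih =>
      intro p hp
      have h2m : (0:ℝ) < 2 ^ m := by positivity
      rcases le_or_gt p (2 ^ m) with h | h
      · -- left half : t = (p/2^m)/2
        have ht : (p:ℝ) / 2 ^ m ∈ Set.Icc (0:ℝ) 1 := by
          constructor
          · positivity
          · rw [div_le_one h2m]; exact_mod_cast h
        have heq : (p:ℝ) / 2 ^ (m + 1) = ((p:ℝ) / 2 ^ m) / 2 := by
          rw [pow_succ]; ring
        rw [heq, psi_half_iter ht (m + 2), Function.iterate_succ_apply', ih p h,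
          psi_zero, zero_div]
      · rcases eq_or_lt_of_le hp with hpe | hplt
        · -- t = 1
          have : ((p:ℝ)) / 2 ^ (m + 1) = 1 := by
            rw [hpe]; push_cast; field_simp
          rw [this, Function.iterate_succ_apply, psi_one, psi_iter_zero]
        · -- 1/2 < t < 1
          set t : ℝ := (p:ℝ) / 2 ^ (m + 1) with htdef
          have hpr : (2:ℝ) ^ m < (p:ℝ) := by exact_mod_cast h
          have hpr2 : (p:ℝ) < 2 ^ (m + 1) := by exact_mod_cast hplt
          have h2m1 : (0:ℝ) < 2 ^ (m+1) := by positivity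
          have ht1 : 1/2 < t := by
            rw [htdef, lt_div_iff₀ h2m1, pow_succ]
            linarith
          have ht2 : t < 1 := by
            rw [htdef, div_lt_one h2m1]; exact hpr2
          have hq : (2:ℝ) * t - 1 = ((p - 2^m : ℕ) : ℝ) / 2 ^ m := by
            have : ((p - 2^m : ℕ) : ℝ) = (p:ℝ) - 2^m := by
              push_cast [Nat.cast_sub (le_of_lt h)]; ring
            rw [this, htdef, pow_succ]
            field_simp
          set q : ℕ := p - 2^m with hqdef
          have hqlt : q < 2 ^ m := by
            have h2 : p < 2^m + 2^m := by
              have : 2^(m+1) = 2^m + 2^m := by rw [pow_succ]; ring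
              omega
            omega
          rw [Function.iterate_succ_apply, psi_mid ht1 ht2, hq]
          rcases le_or_gt ((q:ℝ) / 2^m) (1/2) with hc | hc
          · have hA : psi0 ((q:ℝ) / 2^m) / 2 = (q:ℝ) / 2^m := by
              rw [psi0, if_pos hc]; ring
            rw [hA]
            exact ih q (le_of_lt hqlt)
          · have hB : psi0 ((q:ℝ) / 2^m) / 2 = ((2^m - q : ℕ):ℝ) / 2^m := by
              rw [psi0, if_neg (not_le.2 hc)]
              push_cast [Nat.cast_sub hqlt.le]
              field_simp
            rw [hB]
            exact ih (2^m - q) (Nat.sub_le _ _)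

lemma phi_iter_eq {t : ℝ} (ht : t ∈ Set.Icc (0:ℝ) 1) (n : ℕ) : phi^[n] t = psi^[n] t := by
  induction n generalizing t with
  | zero => rfl
  | succ n ihn =>
      rw [Function.iterate_succ_apply, Function.iterate_succ_apply, phi, if_pos ht.2]
      exact ihn (psi_mem ht)

/-- The set `E = ⋃_{n ≥ 1} φ⁻ⁿ(0)` is dense in `[0,2]`. -/
theorem stmt11 :
    Set.Icc (0 : ℝ) 2 ⊆
      closure {t : ℝ | t ∈ Set.Icc (0 : ℝ) 2 ∧ ∃ n : ℕ, 1 ≤ n ∧ phi^[n] t = 0} := by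
  intro t ht
  rw [Metric.mem_closure_iff]
  intro ε hε
  obtain ⟨k, hk⟩ := exists_pow_lt_of_lt_one hε (by norm_num : (1:ℝ)/2 < 1)
  have h2k : (0:ℝ) < 2 ^ k := by positivity
  have hfl0 : 0 ≤ ⌊(2:ℝ)^k * t⌋ := Int.floor_nonneg.2 (mul_nonneg h2k.le ht.1)
  set p : ℕ := (⌊(2:ℝ)^k * t⌋).toNat with hp
  have hpc : (p:ℝ) = (⌊(2:ℝ)^k * t⌋ : ℝ) := by
    rw [hp]; exact_mod_cast Int.toNat_of_nonneg hfl0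
  set s : ℝ := (p:ℝ) / 2 ^ k with hs
  have hs0 : 0 ≤ s := by positivity
  have hsle : s ≤ t := by
    rw [hs, div_le_iff₀ h2k, hpc, mul_comm]
    exact Int.floor_le _
  have hlt : t - s < (1/2)^k := by
    have h1 : (2:ℝ)^k * t < (p:ℝ) + 1 := by
      rw [hpc]; exact Int.lt_floor_add_one _
    rw [hs, div_pow, one_pow, sub_lt_iff_lt_add, ← add_div, lt_div_iff₀ h2k,
      mul_comm]
    linarith
  have hs2 : s ≤ 2 := le_trans hsle ht.2
  have hp2 : p ≤ 2 ^ (k + 1) := by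
    have : (p:ℝ) ≤ 2^(k+1) := by
      rw [hpc, pow_succ]
      calc (⌊(2:ℝ)^k * t⌋ : ℝ) ≤ (2:ℝ)^k * t := Int.floor_le _
        _ ≤ 2^k * 2 := by nlinarith [ht.2]
    exact_mod_cast this
  refine ⟨s, ⟨⟨hs0, hs2⟩, ?_⟩, ?_⟩
  · -- s is eventually mapped to 0
    by_cases hs1 : s ≤ 1
    · have hpk : p ≤ 2 ^ k := by
        have : (p:ℝ) ≤ 2^k := by
          rw [hs, div_le_one h2k] at hs1; exact hs1
        exact_mod_cast this
      exact ⟨k + 1, by omega, by rw [phi_iter_eq ⟨hs0, hs1⟩, hs, key k p hpk]⟩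
    · push_neg at hs1
      set q : ℕ := 2 ^ (k + 1) - p with hq
      have hqc : ((q:ℕ):ℝ) = 2^(k+1) - (p:ℝ) := by
        rw [hq]; push_cast [Nat.cast_sub hp2]; ring
      have h2s : 2 - s = (q:ℝ) / 2 ^ k := by
        rw [hqc, hs, pow_succ]; field_simp
      have hpk : 2 ^ k ≤ p := by
        have : (2:ℝ)^k ≤ (p:ℝ) := by
          rw [hs, lt_div_iff₀ h2k] at hs1; linarith
        exact_mod_cast this
      have hqk : q ≤ 2 ^ k := by
        have h2 : 2^(k+1) = 2^k + 2^k := by rw [pow_succ]; ring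
        omega
      have h2smem : 2 - s ∈ Set.Icc (0:ℝ) 1 := ⟨by linarith, by linarith⟩
      refine ⟨k + 2, by omega, ?_⟩
      have hphis : phi s = psi (2 - s) := by
        rw [phi, if_neg (not_le.2 hs1)]
      rw [Function.iterate_succ_apply, hphis, phi_iter_eq (psi_mem h2smem),
        ← Function.iterate_succ_apply, Function.iterate_succ_apply', h2s,
        key k q hqk, psi_zero]
  · rw [Real.dist_eq, abs_of_nonneg (by linarith)]
    linarith
end

section
/- Let $X$ be the completion of $C[0,2]$ in the norm $|\|f\|| = \sup_n \frac{1}{n!}\max_{t \in \varphi^{-n}(0)}|f(t)|$, and let $A$ be the continuous extension of the composition operator $T_\varphi f = f \circ \varphi$. Then $\|A\| \le 1$ and for every $x$ in the closed ideal $J = \{x \in X : x(0) = 0\}$ and every $k \in \mathbb{N}$, $|\|A^k x\|| \leq \frac{1}{k!}|\|x\||$; in particular the restriction of $A$ to $J$ is quasinilpotent. -/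
/-- The level set `φ⁻⁽ⁿ⁺¹⁾(0)` inside `[0,2]` (indexing so that `Z 0 = φ⁻¹(0)`). -/
def Zlevel (n : ℕ) : Set (Set.Icc (0 : ℝ) 2) :=
  {t : Set.Icc (0 : ℝ) 2 | phi^[n + 1] (t : ℝ) = 0}

/-- The norm `|‖f‖| = sup_{n ≥ 1} (1/n!) max_{t ∈ φ⁻ⁿ(0)} |f t|` on `C[0,2]`. -/
noncomputable def tnorm (f : C(Set.Icc (0 : ℝ) 2, ℝ)) : ℝ :=
  ⨆ n : ℕ, (((n + 1).factorial : ℝ))⁻¹ *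
    sSup ((fun t : Set.Icc (0 : ℝ) 2 => |f t|) '' Zlevel n)

abbrev I02 := Set.Icc (0 : ℝ) 2

def z0 : I02 := ⟨0, by norm_num⟩

lemma zero_mem_Zlevel (n : ℕ) : z0 ∈ Zlevel n :=
  show phi^[n + 1] ((0 : ℝ)) = 0 from Function.iterate_fixed phi_zero (n + 1)

noncomputable def Sl (f : C(I02, ℝ)) (n : ℕ) : ℝ :=
  sSup ((fun t : I02 => |f t|) '' Zlevel n)

lemma Sl_bddAbove (f : C(I02, ℝ)) (n : ℕ) :
    BddAbove ((fun t : I02 => |f t|) '' Zlevel n) := by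
  refine ⟨‖f‖, ?_⟩
  rintro _ ⟨t, _, rfl⟩
  simpa [Real.norm_eq_abs] using f.norm_coe_le_norm t

lemma Sl_nonneg (f : C(I02, ℝ)) (n : ℕ) : 0 ≤ Sl f n :=
  le_trans (abs_nonneg _) (le_csSup (Sl_bddAbove f n) ⟨z0, zero_mem_Zlevel n, rfl⟩)

lemma Sl_le_norm (f : C(I02, ℝ)) (n : ℕ) : Sl f n ≤ ‖f‖ := by
  refine csSup_le ⟨_, ⟨z0, zero_mem_Zlevel n, rfl⟩⟩ ?_
  rintro _ ⟨t, _, rfl⟩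
  simpa [Real.norm_eq_abs] using f.norm_coe_le_norm t

lemma tnorm_term_bddAbove (f : C(I02, ℝ)) :
    BddAbove (Set.range fun n : ℕ => (((n + 1).factorial : ℝ))⁻¹ * Sl f n) := by
  refine ⟨‖f‖, ?_⟩
  rintro _ ⟨n, rfl⟩
  calc (((n + 1).factorial : ℝ))⁻¹ * Sl f n ≤ 1 * Sl f n := by
        apply mul_le_mul_of_nonneg_right _ (Sl_nonneg f n)
        rw [inv_le_one_iff₀]
        right
        exact_mod_cast Nat.one_le_iff_ne_zero.mpr (Nat.factorial_ne_zero _)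
    _ = Sl f n := one_mul _
    _ ≤ ‖f‖ := Sl_le_norm f n

lemma tnorm_eq (f : C(I02, ℝ)) :
    tnorm f = ⨆ n : ℕ, (((n + 1).factorial : ℝ))⁻¹ * Sl f n := rfl

lemma term_le_tnorm (f : C(I02, ℝ)) (n : ℕ) :
    (((n + 1).factorial : ℝ))⁻¹ * Sl f n ≤ tnorm f :=
  le_ciSup (tnorm_term_bddAbove f) n

lemma tnorm_nonneg (f : C(I02, ℝ)) : 0 ≤ tnorm f :=
  le_trans (mul_nonneg (by positivity) (Sl_nonneg f 0)) (term_le_tnorm f 0)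

lemma tnorm_le_norm (f : C(I02, ℝ)) : tnorm f ≤ ‖f‖ := by
  refine ciSup_le fun n => ?_
  calc (((n + 1).factorial : ℝ))⁻¹ * Sl f n ≤ 1 * Sl f n := by
        apply mul_le_mul_of_nonneg_right _ (Sl_nonneg f n)
        rw [inv_le_one_iff₀]
        right
        exact_mod_cast Nat.one_le_iff_ne_zero.mpr (Nat.factorial_ne_zero _)
    _ = Sl f n := one_mul _
    _ ≤ ‖f‖ := Sl_le_norm f n

lemma mem_Zlevel_pred {phic : C(I02, I02)} (hphic : ∀ t : I02, (phic t : ℝ) = phi t)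
    {n : ℕ} {t : I02} (ht : t ∈ Zlevel n) : phic t ∈ Zlevel (n - 1) := by
  have h : phi^[(n - 1) + 1] (phi (t : ℝ)) = 0 := by
    rcases n with _ | m
    · have h0 : phi (t : ℝ) = 0 := by simpa [Zlevel] using ht
      simpa [h0] using phi_zero
    · have h2 : phi^[m + 1 + 1] ((t : ℝ)) = 0 := ht
      rw [Function.iterate_succ_apply] at h2
      simpa using h2
  show phi^[(n - 1) + 1] ((phic t : ℝ)) = 0
  rw [hphic t]; exact h

/-- `tnorm (f ∘ φ) ≤ tnorm f`. -/
lemma tnorm_comp_le {phic : C(I02, I02)} (hphic : ∀ t : I02, (phic t : ℝ) = phi t)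
    (f : C(I02, ℝ)) : tnorm (f.comp phic) ≤ tnorm f := by
  refine ciSup_le fun n => ?_
  have hsub : (fun t : I02 => |(f.comp phic) t|) '' Zlevel n ⊆
      (fun t : I02 => |f t|) '' Zlevel (n - 1) := by
    rintro _ ⟨t, ht, rfl⟩
    exact ⟨phic t, mem_Zlevel_pred hphic ht, rfl⟩
  have hS : Sl (f.comp phic) n ≤ Sl f (n - 1) :=
    csSup_le_csSup (Sl_bddAbove f (n - 1)) ⟨_, ⟨z0, zero_mem_Zlevel n, rfl⟩⟩ hsub
  have hfac : (((n - 1) + 1).factorial : ℝ)⁻¹ * Sl f (n - 1) ≤ tnorm f :=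
    term_le_tnorm f (n - 1)
  refine le_trans ?_ hfac
  have h1 : (((n + 1).factorial : ℝ))⁻¹ ≤ (((n - 1) + 1).factorial : ℝ)⁻¹ := by
    apply inv_anti₀
    · exact_mod_cast Nat.factorial_pos _
    · exact_mod_cast Nat.factorial_le (Nat.succ_le_succ (Nat.sub_le n 1))
  calc (((n + 1).factorial : ℝ))⁻¹ * Sl (f.comp phic) n
      ≤ (((n + 1).factorial : ℝ))⁻¹ * Sl f (n - 1) := by
        exact mul_le_mul_of_nonneg_left hS (by positivity)
    _ ≤ (((n - 1) + 1).factorial : ℝ)⁻¹ * Sl f (n - 1) :=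
        mul_le_mul_of_nonneg_right h1 (Sl_nonneg f _)

/-- Iterates of `phic` as continuous maps. -/
noncomputable def itc (phic : C(I02, I02)) : ℕ → C(I02, I02)
  | 0 => ContinuousMap.id _
  | (k + 1) => phic.comp (itc phic k)

lemma itc_apply {phic : C(I02, I02)} (hphic : ∀ t : I02, (phic t : ℝ) = phi t)
    (k : ℕ) (t : I02) : ((itc phic k) t : ℝ) = phi^[k] (t : ℝ) := by
  induction k with
  | zero => rfl
  | succ k ih =>
      simp only [itc, ContinuousMap.comp_apply, hphic, ih,
        Function.iterate_succ_apply']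

/-- The key estimate: for `g` vanishing at `0`, `tnorm (g ∘ φ^[k]) ≤ tnorm g / k!`. -/
lemma tnorm_comp_itc_le {phic : C(I02, I02)} (hphic : ∀ t : I02, (phic t : ℝ) = phi t)
    (g : C(I02, ℝ)) (hg : g z0 = 0) (k : ℕ) :
    tnorm (g.comp (itc phic k)) ≤ ((k.factorial : ℝ))⁻¹ * tnorm g := by
  refine ciSup_le fun n => ?_
  rcases le_or_gt (n + 1) k with h | h
  · -- all values are 0
    have hval : ∀ t ∈ Zlevel n, |(g.comp (itc phic k)) t| = 0 := by
      intro t ht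
      have h0 : ((itc phic k) t : ℝ) = 0 := by
        rw [itc_apply hphic]
        have : phi^[k] (t : ℝ) = phi^[k - (n + 1)] (phi^[n + 1] (t : ℝ)) := by
          rw [← Function.iterate_add_apply, Nat.sub_add_cancel h]
        rw [this, ht]
        exact Function.iterate_fixed phi_zero _
      have : (itc phic k) t = z0 := Subtype.ext h0
      simp [this, hg]
    have hS : Sl (g.comp (itc phic k)) n ≤ 0 := by
      refine csSup_le ⟨_, ⟨z0, zero_mem_Zlevel n, rfl⟩⟩ ?_
      rintro _ ⟨t, ht, rfl⟩
      exact le_of_eq (hval t ht)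
    calc (((n + 1).factorial : ℝ))⁻¹ * Sl (g.comp (itc phic k)) n
        ≤ (((n + 1).factorial : ℝ))⁻¹ * 0 := mul_le_mul_of_nonneg_left hS (by positivity)
      _ = 0 := mul_zero _
      _ ≤ ((k.factorial : ℝ))⁻¹ * tnorm g := mul_nonneg (by positivity) (tnorm_nonneg g)
  · -- k ≤ n
    have hk : k ≤ n := Nat.lt_succ_iff.mp h
    have hmem : ∀ t ∈ Zlevel n, (itc phic k) t ∈ Zlevel (n - k) := by
      intro t ht
      show phi^[(n - k) + 1] (((itc phic k) t : ℝ)) = 0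
      rw [itc_apply hphic, ← Function.iterate_add_apply]
      have : n - k + 1 + k = n + 1 := by omega
      rw [this]; exact ht
    have hS : Sl (g.comp (itc phic k)) n ≤ Sl g (n - k) := by
      refine csSup_le_csSup (Sl_bddAbove g (n - k)) ⟨_, ⟨z0, zero_mem_Zlevel n, rfl⟩⟩ ?_
      rintro _ ⟨t, ht, rfl⟩
      exact ⟨(itc phic k) t, hmem t ht, rfl⟩
    have hfacnat : k.factorial * ((n - k) + 1).factorial ≤ (n + 1).factorial := by
      have hd := Nat.factorial_mul_factorial_dvd_factorial_add k ((n - k) + 1)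
      have he : k + ((n - k) + 1) = n + 1 := by omega
      rw [he] at hd
      exact Nat.le_of_dvd (Nat.factorial_pos _) hd
    have hfac : (((n + 1).factorial : ℝ))⁻¹ ≤
        ((k.factorial : ℝ))⁻¹ * ((((n - k) + 1).factorial : ℝ))⁻¹ := by
      rw [← mul_inv]
      apply inv_anti₀
      · positivity
      · exact_mod_cast hfacnat
    calc (((n + 1).factorial : ℝ))⁻¹ * Sl (g.comp (itc phic k)) n
        ≤ (((n + 1).factorial : ℝ))⁻¹ * Sl g (n - k) :=
          mul_le_mul_of_nonneg_left hS (by positivity)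
      _ ≤ (((k.factorial : ℝ))⁻¹ * ((((n - k) + 1).factorial : ℝ))⁻¹) * Sl g (n - k) :=
          mul_le_mul_of_nonneg_right hfac (Sl_nonneg g _)
      _ = ((k.factorial : ℝ))⁻¹ * (((((n - k) + 1).factorial : ℝ))⁻¹ * Sl g (n - k)) :=
          mul_assoc _ _ _
      _ ≤ ((k.factorial : ℝ))⁻¹ * tnorm g :=
          mul_le_mul_of_nonneg_left (term_le_tnorm g (n - k)) (by positivity)


/-- Let `X` be the completion of `C[0,2]` in the norm `|‖·‖|` (presented
abstractly: a Banach lattice with a dense lattice-isometric embedding `j`), let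
`A` extend the composition operator `f ↦ f ∘ φ` and `δ` extend evaluation at
`0`.  Then `‖A‖ ≤ 1` and `|‖Aᵏ x‖| ≤ |‖x‖| / k!` for all `x` in the closed
ideal `J = {x : x(0) = 0}`; in particular `A` restricted to `J` is
quasinilpotent. -/
theorem stmt13 {X : Type*} [NormedAddCommGroup X] [Lattice X]
    [IsOrderedAddMonoid X] [HasSolidNorm X] [NormedSpace ℝ X]
    [CompleteSpace X]
    (j : C(Set.Icc (0 : ℝ) 2, ℝ) →ₗ[ℝ] X)
    (hjiso : ∀ f, ‖j f‖ = tnorm f)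
    (hjlat : ∀ f, j |f| = |j f|)
    (hjdense : DenseRange j)
    (phic : C(Set.Icc (0 : ℝ) 2, Set.Icc (0 : ℝ) 2))
    (hphic : ∀ t : Set.Icc (0 : ℝ) 2, (phic t : ℝ) = phi t)
    (A : X →L[ℝ] X) (hA : ∀ f, A (j f) = j (f.comp phic))
    (δ : X →L[ℝ] ℝ)
    (hδ : ∀ f : C(Set.Icc (0 : ℝ) 2, ℝ), δ (j f) = f ⟨0, by norm_num⟩) :
    ‖A‖ ≤ 1 ∧
      ∀ x : X, δ x = 0 → ∀ k : ℕ,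
        ‖(A ^ k) x‖ ≤ ((k.factorial : ℝ))⁻¹ * ‖x‖ := by
  have hAk : ∀ (k : ℕ) (g : C(I02, ℝ)), (A ^ k) (j g) = j (g.comp (itc phic k)) := by
    intro k
    induction k with
    | zero =>
        intro g
        simp [itc]
    | succ k ih =>
        intro g
        rw [pow_succ, ContinuousLinearMap.mul_apply, hA, ih]
        congr 1
  have hA1 : ∀ x : X, ‖A x‖ ≤ ‖x‖ := by
    have hclosed : IsClosed {x : X | ‖A x‖ ≤ ‖x‖} :=
      isClosed_le (continuous_norm.comp A.continuous) continuous_norm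
    have hsub : Set.range j ⊆ {x | ‖A x‖ ≤ ‖x‖} := by
      rintro _ ⟨f, rfl⟩
      simp only [Set.mem_setOf_eq, hA, hjiso]
      exact tnorm_comp_le hphic f
    intro x
    exact closure_minimal hsub hclosed (hjdense x)
  refine ⟨A.opNorm_le_bound zero_le_one (fun x => by simpa using hA1 x), ?_⟩
  intro x hx k
  refine le_of_forall_pos_le_add fun ε hε => ?_
  set C : ℝ := ((k.factorial : ℝ))⁻¹ with hC
  have hCpos : 0 < C := by positivity
  set D : ℝ := (‖A ^ k‖ + C) * (1 + ‖δ‖) + 1 with hD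
  have hDpos : 0 < D := by positivity
  obtain ⟨f, hf⟩ := hjdense.exists_dist_lt x (div_pos hε hDpos)
  have hd : ‖j f - x‖ ≤ ε / D := by
    rw [dist_comm, dist_eq_norm] at hf
    exact le_of_lt hf
  set c := f z0 with hc0
  set g := f - ContinuousMap.const I02 c with hgdef
  have hg0 : g z0 = 0 := by simp [hgdef, hc0]
  have hcle : |c| ≤ ‖δ‖ * ‖j f - x‖ := by
    have h1 : δ (j f) = c := hδ f
    calc |c| = ‖δ (j f - x)‖ := by
          rw [map_sub, h1, hx, sub_zero, Real.norm_eq_abs]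
      _ ≤ ‖δ‖ * ‖j f - x‖ := δ.le_opNorm _
  have hconst : ‖j (ContinuousMap.const I02 c)‖ ≤ |c| := by
    rw [hjiso]
    refine le_trans (tnorm_le_norm _) ?_
    refine (ContinuousMap.norm_le _ (abs_nonneg c)).mpr fun t => by
      simp [Real.norm_eq_abs]
  have hgx : ‖j g - x‖ ≤ (1 + ‖δ‖) * ‖j f - x‖ := by
    have hjg : j g = j f - j (ContinuousMap.const I02 c) := map_sub j _ _
    calc ‖j g - x‖ = ‖(j f - x) - j (ContinuousMap.const I02 c)‖ := by
          rw [hjg, sub_right_comm]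
      _ ≤ ‖j f - x‖ + ‖j (ContinuousMap.const I02 c)‖ := norm_sub_le _ _
      _ ≤ ‖j f - x‖ + ‖δ‖ * ‖j f - x‖ := by linarith [hconst.trans hcle]
      _ = (1 + ‖δ‖) * ‖j f - x‖ := by ring
  have hgx2 : ‖j g - x‖ ≤ (1 + ‖δ‖) * (ε / D) := by
    refine hgx.trans (mul_le_mul_of_nonneg_left hd ?_)
    positivity
  have hstep : ‖(A ^ k) (j g)‖ ≤ C * ‖j g‖ := by
    rw [hAk k g, hjiso, hjiso]
    exact tnorm_comp_itc_le hphic g hg0 k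
  have hjgnorm : ‖j g‖ ≤ ‖x‖ + (1 + ‖δ‖) * (ε / D) := by
    calc ‖j g‖ ≤ ‖x‖ + ‖j g - x‖ := by
          have := norm_add_le (j g - x) x
          simpa [sub_add_cancel, add_comm] using this
      _ ≤ ‖x‖ + (1 + ‖δ‖) * (ε / D) := by linarith
  have hED : (‖A ^ k‖ + C) * (1 + ‖δ‖) * (ε / D) ≤ ε := by
    have h1 : (‖A ^ k‖ + C) * (1 + ‖δ‖) ≤ D := by rw [hD]; linarith
    calc (‖A ^ k‖ + C) * (1 + ‖δ‖) * (ε / D) ≤ D * (ε / D) :=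
          mul_le_mul_of_nonneg_right h1 (by positivity)
      _ = ε := by field_simp
  calc ‖(A ^ k) x‖ = ‖(A ^ k) (x - j g) + (A ^ k) (j g)‖ := by
        rw [← map_add, sub_add_cancel]
    _ ≤ ‖(A ^ k) (x - j g)‖ + ‖(A ^ k) (j g)‖ := norm_add_le _ _
    _ ≤ ‖A ^ k‖ * ‖x - j g‖ + C * ‖j g‖ := add_le_add ((A ^ k).le_opNorm _) hstep
    _ ≤ ‖A ^ k‖ * ((1 + ‖δ‖) * (ε / D)) + C * (‖x‖ + (1 + ‖δ‖) * (ε / D)) := by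
        have hxjg : ‖x - j g‖ ≤ (1 + ‖δ‖) * (ε / D) := by
          rw [norm_sub_rev]; exact hgx2
        have h1 : 0 ≤ ‖A ^ k‖ := norm_nonneg _
        have h2 : 0 ≤ C := le_of_lt hCpos
        nlinarith [norm_nonneg (j g), norm_nonneg (x - j g)]
    _ = C * ‖x‖ + (‖A ^ k‖ + C) * (1 + ‖δ‖) * (ε / D) := by ring
    _ ≤ C * ‖x‖ + ε := by linarith
end

section
/- Let $X$ be a Banach lattice, $T$ a positive operator on $X$ such that $\rho(T) = 1$ is a pole of the resolvent of order $p$, let $Q_{-p} = \lim_{\lambda \downarrow 1}(\lambda-1)^p R(\lambda,T)$ (norm limit), and suppose $S$ is a nonzero positive weakly compact order continuous operator commuting with $T$, and $T$ is band irreducible. Then $Q_{-p}$ is $\sigma$-order continuous: if $x_n \downarrow 0$ then $\inf_n Q_{-p}x_n = 0$. -/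
/-- A continuous linear operator `S` on a Banach space is weakly compact if
every bounded sequence has a subsequence whose image under `S` converges
weakly. -/
def WeaklyCompactOp {X : Type*} [NormedAddCommGroup X] [NormedSpace ℝ X]
    (S : X →L[ℝ] X) : Prop :=
  ∀ x : ℕ → X, Bornology.IsBounded (Set.range x) →
    ∃ (σ : ℕ → ℕ) (y : X), StrictMono σ ∧
      ∀ f : X →L[ℝ] ℝ,
        Filter.Tendsto (fun n => f (S (x (σ n)))) Filter.atTop (nhds (f y))

open Filter

section helpers
variable {X : Type*} [NormedAddCommGroup X] [Lattice X] [HasSolidNorm X]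
    [IsOrderedAddMonoid X]

lemma riesz_inf_add (a b c : X) (ha : 0 ≤ a) (hb : 0 ≤ b) (hc : 0 ≤ c) :
    (a + b) ⊓ c ≤ a ⊓ c + b ⊓ c := by
  have h1 : (a + b) ⊓ c ≤ a + b ⊓ c := by
    have h := inf_le_inf_left (a + b) (le_add_of_nonneg_left (a := c) ha)
    rwa [← add_inf] at h
  have h2 : (a + b) ⊓ c - b ⊓ c ≤ a := by
    rw [sub_le_iff_le_add]
    exact h1.trans (by rw [add_comm])
  have h3 : (a + b) ⊓ c - b ⊓ c ≤ c :=
    le_trans (sub_le_self _ (le_inf hb hc)) inf_le_right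
  have h4 := le_inf h2 h3
  rwa [sub_le_iff_le_add] at h4

lemma inf_nsmul_zero (a b : X) (ha : 0 ≤ a) (hb : 0 ≤ b) (h : a ⊓ b = 0) (n : ℕ) :
    a ⊓ (n • b) = 0 := by
  induction n with
  | zero => simpa using inf_eq_right.mpr ha
  | succ n ih =>
    have h0 : 0 ≤ n • b := nsmul_nonneg hb n
    have h1 := riesz_inf_add (n • b) b a h0 hb ha
    rw [succ_nsmul]
    refine le_antisymm ?_ (le_inf ha (by positivity))
    calc a ⊓ (n • b + b) = (n • b + b) ⊓ a := inf_comm ..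
    _ ≤ (n • b) ⊓ a + b ⊓ a := h1
    _ = a ⊓ (n • b) + a ⊓ b := by rw [inf_comm, inf_comm b a]
    _ = 0 := by rw [ih, h, add_zero]

lemma negPart_sub' (u v : X) : (u - v)⁻ = v - u ⊓ v := by
  have : v - u ⊓ v = (v - u) ⊔ 0 := by
    rw [sub_eq_add_neg, neg_inf, add_sup, ← sub_eq_add_neg, ← sub_eq_add_neg, sub_self]
  rw [this, negPart_def, neg_sub]

lemma nonneg_of_nsmul_nonneg {x : X} {n : ℕ} (hn : 0 < n) (h : 0 ≤ n • x) : 0 ≤ x := by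
  have hd : (n • x⁺) ⊓ (n • x⁻) = 0 := by
    have h1 : (n • x⁺) ⊓ x⁻ = 0 := by
      rw [inf_comm]
      exact inf_nsmul_zero _ _ (negPart_nonneg x) (posPart_nonneg x)
        (by rw [inf_comm]; exact posPart_inf_negPart_eq_zero x) n
    exact inf_nsmul_zero _ _ (nsmul_nonneg (posPart_nonneg x) n) (negPart_nonneg x) h1 n
  have h1 : n • x = n • x⁺ - n • x⁻ := by
    rw [← nsmul_sub, posPart_sub_negPart]
  have h2 : (n • x)⁻ = n • x⁻ := by rw [h1, negPart_sub', hd, sub_zero]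
  have h3 : (n • x)⁻ = 0 := negPart_eq_zero.mpr h
  have h4 : n • x⁻ = 0 := by rw [← h2, h3]
  obtain ⟨k, rfl⟩ := Nat.exists_eq_succ_of_ne_zero hn.ne'
  have h5 : x⁻ ≤ (k + 1) • x⁻ := by
    rw [succ_nsmul]
    exact le_add_of_nonneg_left (nsmul_nonneg (negPart_nonneg x) k)
  exact negPart_eq_zero.mp (le_antisymm (h4 ▸ h5) (negPart_nonneg x))

end helpers

section helpers2
variable {X : Type*} [NormedAddCommGroup X] [Lattice X] [HasSolidNorm X]
    [IsOrderedAddMonoid X] [NormedSpace ℝ X]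

lemma real_smul_nonneg {r : ℝ} {x : X} (hr : 0 ≤ r) (hx : 0 ≤ x) : 0 ≤ r • x := by
  have hq : ∀ q : ℚ, 0 ≤ q → 0 ≤ (q : ℝ) • x := by
    intro q hq0
    apply nonneg_of_nsmul_nonneg q.pos
    have h1 : (q.den : ℕ) • ((q : ℝ) • x) = q.num.toNat • x := by
      rw [← Nat.cast_smul_eq_nsmul ℝ, ← Nat.cast_smul_eq_nsmul ℝ, smul_smul]
      congr 1
      have hnum : ((q.num.toNat : ℝ)) = ((q.num : ℤ) : ℝ) := by
        exact_mod_cast congrArg (Int.cast : ℤ → ℝ) (Int.toNat_of_nonneg (Rat.num_nonneg.mpr hq0))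
      rw [hnum, Rat.cast_def]
      have hd : (q.den : ℝ) ≠ 0 := Nat.cast_ne_zero.mpr q.den_nz
      field_simp
    rw [h1]
    exact nsmul_nonneg hx _
  have hex : ∀ n : ℕ, ∃ q : ℚ, r < (q : ℝ) ∧ (q : ℝ) < r + 1 / (n + 1) := by
    intro n
    have : (0:ℝ) < 1 / (n + 1) := by positivity
    exact exists_rat_btwn (by linarith)
  choose q hq1 hq2 using hex
  have htend : Tendsto (fun n : ℕ => ((q n : ℝ))) atTop (nhds r) := by
    have h1 : Tendsto (fun n : ℕ => r + 1 / (n + 1 : ℝ)) atTop (nhds r) := by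
      have := tendsto_one_div_add_atTop_nhds_zero_nat (𝕜 := ℝ)
      simpa using tendsto_const_nhds.add this
    exact tendsto_of_tendsto_of_tendsto_of_le_of_le tendsto_const_nhds h1
      (fun n => (hq1 n).le) (fun n => (hq2 n).le)
  have htend2 : Tendsto (fun n : ℕ => (q n : ℝ) • x) atTop (nhds (r • x)) :=
    htend.smul_const x
  refine isClosed_nonneg.mem_of_tendsto htend2 (Eventually.of_forall fun n => ?_)
  exact hq (q n) (by exact_mod_cast (hr.trans (hq1 n).le))

lemma real_smul_mono {r : ℝ} {a b : X} (hr : 0 ≤ r) (h : a ≤ b) : r • a ≤ r • b := by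
  have := real_smul_nonneg hr (sub_nonneg.2 h)
  rw [smul_sub] at this
  exact sub_nonneg.mp this

lemma abs_smul_le (r : ℝ) (x : X) : |r • x| ≤ |r| • |x| := by
  have key : ∀ z : X, r • z ≤ |r| • |z| := by
    intro z
    rcases le_or_gt 0 r with h | h
    · rw [abs_of_nonneg h]; exact real_smul_mono h (le_abs_self z)
    · rw [abs_of_neg h]
      have hz : r • z = (-r) • (-z) := by rw [neg_smul, smul_neg, neg_neg]
      rw [hz]
      exact real_smul_mono (neg_nonneg.2 h.le) (neg_le_abs z)
  have h1 : r • x ≤ |r| • |x| := key x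
  have h2 : -(r • x) ≤ |r| • |x| := by
    rw [← smul_neg]
    simpa [abs_neg] using key (-x)
  exact abs_le'.mpr ⟨h1, h2⟩

lemma dual_nonneg {x : X} [CompleteSpace X]
    (h : ∀ f : X →L[ℝ] ℝ, (∀ z : X, 0 ≤ z → 0 ≤ f z) → 0 ≤ f x) : 0 ≤ x := by
  by_contra hx
  have hC : Convex ℝ {z : X | 0 ≤ z} := fun a ha b hb s t hs ht _ =>
    add_nonneg (real_smul_nonneg hs ha) (real_smul_nonneg ht hb)
  obtain ⟨f, u, hfx, hfb⟩ := geometric_hahn_banach_point_closed hC isClosed_nonneg hx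
  clear hx
  have hu : u < 0 := by simpa using hfb 0 le_rfl
  have hfpos : ∀ z : X, 0 ≤ z → 0 ≤ f z := by
    intro z hz
    by_contra hfz
    push_neg at hfz
    have ht : (0:ℝ) ≤ (u - 1) / f z := by
      apply div_nonneg_iff.mpr
      exact Or.inr ⟨by linarith, hfz.le⟩
    have := hfb (((u - 1) / f z) • z) (real_smul_nonneg ht hz)
    rw [map_smul] at this
    rw [smul_eq_mul, div_mul_cancel₀ _ hfz.ne] at this
    linarith
  exact absurd (h f hfpos) (not_le.mpr (by linarith))

end helpers2

/-- Let `T` be a positive band irreducible operator on a Banach lattice with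
`ρ(T) = 1` a pole of the resolvent of order `p`, and let
`Q = Q₋ₚ = lim_{λ↓1} (λ-1)ᵖ R(λ,T)` (norm limit, nonzero, positive, commuting
with `T`).  If a nonzero positive weakly compact order continuous operator `S`
commutes with `T` (and hence with `Q`), then `Q` is σ-order continuous. -/
theorem stmt17 {X : Type*} [NormedAddCommGroup X] [Lattice X] [HasSolidNorm X]
    [IsOrderedAddMonoid X] [NormedSpace ℝ X]
    [CompleteSpace X]
    (T Q S : X →L[ℝ] X)
    (hT : ∀ x : X, 0 ≤ x → 0 ≤ T x)
    (hρ : spectralRadius ℝ T = 1)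
    (p : ℕ) (hp : 0 < p)
    -- `1` is a pole of the resolvent of order `p`, with `Q` the norm limit of
    -- `(λ - 1)ᵖ R(λ, T)` as `λ ↓ 1`:
    (hres : ∀ μ : ℝ, 1 < μ → IsUnit (μ • (1 : X →L[ℝ] X) - T))
    (hQ : Filter.Tendsto
      (fun μ : ℝ => (μ - 1) ^ p • Ring.inverse (μ • (1 : X →L[ℝ] X) - T))
      (nhdsWithin 1 (Set.Ioi 1)) (nhds Q))
    (hQ0 : Q ≠ 0)
    (hQpos : ∀ x : X, 0 ≤ x → 0 ≤ Q x)
    (hQT : Commute Q T)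
    -- `T` is band irreducible:
    (hirr : ¬ ∃ 𝔅 : Submodule ℝ X,
        (∀ x ∈ 𝔅, ∀ y : X, |y| ≤ |x| → y ∈ 𝔅) ∧
        (∀ y : X, (∀ w : X, (∀ v ∈ 𝔅, |w| ⊓ |v| = 0) → |y| ⊓ |w| = 0) → y ∈ 𝔅) ∧
        𝔅 ≠ ⊥ ∧ 𝔅 ≠ ⊤ ∧ (∀ x ∈ 𝔅, T x ∈ 𝔅))
    -- `S` is nonzero, positive, weakly compact, order continuous, and commutes
    -- with `T` (and with `Q`):
    (hS0 : S ≠ 0)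
    (hSpos : ∀ x : X, 0 ≤ x → 0 ≤ S x)
    (hSwc : WeaklyCompactOp S)
    (hSoc : ∀ D : Set X, D.Nonempty → DirectedOn (fun a b => b ≤ a) D →
      IsGLB D 0 → IsGLB ((fun a => S a) '' D) 0)
    (hST : Commute S T) (hSQ : Commute S Q) :
    ∀ xs : ℕ → X, Antitone xs → IsGLB (Set.range xs) 0 →
      IsGLB (Set.range fun n => Q (xs n)) 0 := by
  intro xs hxs hglb
  have hxs0 : ∀ n, 0 ≤ xs n := fun n => hglb.1 ⟨n, rfl⟩
  have hSmono : ∀ {s t : X}, s ≤ t → S s ≤ S t := by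
    intro s t h
    have := hSpos (t - s) (sub_nonneg.2 h)
    rw [map_sub] at this
    exact sub_nonneg.mp this
  have hTmono : ∀ {s t : X}, s ≤ t → T s ≤ T t := by
    intro s t h
    have := hT (t - s) (sub_nonneg.2 h)
    rw [map_sub] at this
    exact sub_nonneg.mp this
  constructor
  · rintro _ ⟨n, rfl⟩
    exact hQpos _ (hxs0 n)
  · intro b hb
    have hy0 : (0:X) ≤ b ⊔ 0 := le_sup_right
    set y := b ⊔ 0 with hydef
    have hyb : ∀ n, y ≤ Q (xs n) := fun n => sup_le (hb ⟨n, rfl⟩) (hQpos _ (hxs0 n))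
    -- Step A : S y = 0
    have hSy : S y = 0 := by
      have hbdd : Bornology.IsBounded (Set.range xs) := by
        refine isBounded_iff_forall_norm_le.2 ⟨‖xs 0‖, ?_⟩
        rintro _ ⟨n, rfl⟩
        exact HasSolidNorm.solid (by
          rw [abs_of_nonneg (hxs0 n), abs_of_nonneg (hxs0 0)]
          exact hxs (Nat.zero_le n))
      obtain ⟨σ, w, hσ, hw⟩ := hSwc xs hbdd
      have hdir : DirectedOn (fun s t => t ≤ s) (Set.range xs) := by
        rintro _ ⟨m, rfl⟩ _ ⟨n, rfl⟩
        exact ⟨xs (max m n), ⟨max m n, rfl⟩, hxs (le_max_left m n), hxs (le_max_right m n)⟩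
      have hSglb : IsGLB ((fun s => S s) '' Set.range xs) 0 :=
        hSoc _ (Set.range_nonempty xs) hdir hglb
      have hw0 : w = 0 := by
        have hwle : ∀ m, w ≤ S (xs m) := by
          intro m
          have h1 : 0 ≤ S (xs m) - w := by
            apply dual_nonneg
            intro f hf
            have hev : ∀ᶠ n in atTop, f (S (xs (σ n))) ≤ f (S (xs m)) := by
              filter_upwards [eventually_ge_atTop m] with n hn
              have h2 : S (xs (σ n)) ≤ S (xs m) := hSmono (hxs (hn.trans hσ.le_apply))
              have h3 := hf _ (sub_nonneg.2 h2)
              rw [map_sub] at h3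
              linarith
            have h4 : f w ≤ f (S (xs m)) := le_of_tendsto (hw f) hev
            rw [map_sub]
            linarith
          exact sub_nonneg.mp h1
        have h5 : w ≤ 0 := hSglb.2 (by rintro _ ⟨_, ⟨m, rfl⟩, rfl⟩; exact hwle m)
        have h6 : 0 ≤ w := dual_nonneg fun f hf =>
          ge_of_tendsto (hw f) (Eventually.of_forall fun n => hf _ (hSpos _ (hxs0 _)))
        exact le_antisymm h5 h6
      have hle0 : ∀ g : X →L[ℝ] ℝ, (∀ z : X, 0 ≤ z → 0 ≤ g z) → g (S y) ≤ 0 := by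
        intro g hg
        have htend := hw (g.comp Q)
        rw [hw0] at htend
        simp only [ContinuousLinearMap.comp_apply, map_zero] at htend
        refine ge_of_tendsto htend (Eventually.of_forall fun n => ?_)
        have h1 : S y ≤ S (Q (xs (σ n))) := hSmono (hyb (σ n))
        have h2 : S (Q (xs (σ n))) = Q (S (xs (σ n))) := by
          simpa [ContinuousLinearMap.mul_apply] using DFunLike.congr_fun hSQ.eq (xs (σ n))
        rw [h2] at h1
        have h3 := hg _ (sub_nonneg.2 h1)
        rw [map_sub] at h3
        linarith
      have h7 : 0 ≤ -(S y) := dual_nonneg fun f hf => by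
        have := hle0 f hf
        rw [map_neg]
        linarith
      exact le_antisymm (neg_nonneg.mp h7) (hSpos y hy0)
    -- Step B : y = 0
    have hy : y = 0 := by
      by_contra hyne
      let Z : Submodule ℝ X :=
        { carrier := {v : X | S |v| = 0}
          add_mem' := by
            intro s t hs ht
            simp only [Set.mem_setOf_eq] at *
            have habs : |s + t| ≤ |s| + |t| := by
              refine abs_le'.mpr ⟨add_le_add (le_abs_self s) (le_abs_self t), ?_⟩
              rw [neg_add]
              exact add_le_add (neg_le_abs s) (neg_le_abs t)
            have h2 := hSmono habs
            rw [map_add, hs, ht, add_zero] at h2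
            exact le_antisymm h2 (hSpos _ (abs_nonneg _))
          zero_mem' := by simp
          smul_mem' := by
            intro r v hv
            simp only [Set.mem_setOf_eq] at *
            have h2 : |r| • |v| ≤ ((⌈|r|⌉₊ : ℕ) : ℝ) • |v| := by
              have h3 := real_smul_nonneg (sub_nonneg.2 (Nat.le_ceil |r|)) (abs_nonneg v)
              rw [sub_smul] at h3
              exact sub_nonneg.mp h3
            have h4 : |r • v| ≤ (⌈|r|⌉₊ : ℕ) • |v| :=
              (abs_smul_le r v).trans (h2.trans_eq (Nat.cast_smul_eq_nsmul ℝ _ _))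
            have h5 := hSmono h4
            rw [map_nsmul, hv, smul_zero] at h5
            exact le_antisymm h5 (hSpos _ (abs_nonneg _)) }
      have hZmem : ∀ v : X, v ∈ Z ↔ S |v| = 0 := fun v => Iff.rfl
      refine hirr ⟨Z, ?_, ?_, ?_, ?_, ?_⟩
      · -- ideal
        intro v hv w hw
        rw [hZmem] at hv ⊢
        have h1 := hSmono hw
        rw [hv] at h1
        exact le_antisymm h1 (hSpos _ (abs_nonneg _))
      · -- band
        intro x hx
        rw [hZmem]
        set a := |x| with hadef
        have ha : 0 ≤ a := abs_nonneg x
        set Zp : Set X := {z : X | S z = 0 ∧ 0 ≤ z} with hZp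
        set D : Set X := (fun z => a - a ⊓ z) '' Zp with hD
        have h0Zp : (0:X) ∈ Zp := ⟨map_zero S, le_rfl⟩
        have haD : a ∈ D := ⟨0, h0Zp, by simp [inf_eq_right.mpr ha]⟩
        have hDdir : DirectedOn (fun s t => t ≤ s) D := by
          rintro _ ⟨z1, hz1, rfl⟩ _ ⟨z2, hz2, rfl⟩
          have hz : (z1 ⊔ z2) ∈ Zp := by
            refine ⟨?_, hz1.2.trans le_sup_left⟩
            have h1 : z1 ⊔ z2 ≤ z1 + z2 :=
              sup_le (le_add_of_nonneg_right hz2.2) (le_add_of_nonneg_left hz1.2)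
            have h2 := hSmono h1
            rw [map_add, hz1.1, hz2.1, add_zero] at h2
            exact le_antisymm h2 (hSpos _ (hz1.2.trans le_sup_left))
          exact ⟨a - a ⊓ (z1 ⊔ z2), ⟨_, hz, rfl⟩,
            sub_le_sub_left (inf_le_inf_left a le_sup_left) a,
            sub_le_sub_left (inf_le_inf_left a le_sup_right) a⟩
        have hDglb : IsGLB D 0 := by
          constructor
          · rintro _ ⟨z, hz, rfl⟩
            exact sub_nonneg.2 inf_le_left
          · intro u hu
            have hu'lb : ∀ z ∈ Zp, u ⊔ 0 ≤ a - a ⊓ z := fun z hz =>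
              sup_le (hu ⟨z, hz, rfl⟩) (sub_nonneg.2 inf_le_left)
            have hkey : ∀ z ∈ Zp, (u ⊔ 0) ⊓ z = 0 := by
              intro z hz
              have hc0 : (0:X) ≤ (u ⊔ 0) ⊓ z := le_inf le_sup_right hz.2
              have hind : ∀ n : ℕ, n • ((u ⊔ 0) ⊓ z) ≤ a ⊓ (n • z) := by
                intro n
                induction n with
                | zero => simpa using ha
                | succ n ih =>
                  have hnz : (n • z) ∈ Zp :=
                    ⟨by rw [map_nsmul, hz.1, smul_zero], nsmul_nonneg hz.2 n⟩
                  rw [succ_nsmul, succ_nsmul]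
                  refine le_inf ?_ ?_
                  · have h3 : (u ⊔ 0) ⊓ z ≤ a - a ⊓ (n • z) :=
                      inf_le_left.trans (hu'lb _ hnz)
                    calc n • ((u ⊔ 0) ⊓ z) + (u ⊔ 0) ⊓ z
                        ≤ a ⊓ (n • z) + (a - a ⊓ (n • z)) := add_le_add ih h3
                    _ = a := by abel
                  · exact add_le_add (ih.trans inf_le_right) inf_le_right
              have hnorm : ∀ n : ℕ, (n : ℝ) * ‖(u ⊔ 0) ⊓ z‖ ≤ ‖a‖ := by
                intro n
                have h1 : |(n:ℝ) • ((u ⊔ 0) ⊓ z)| ≤ |a| := by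
                  rw [abs_of_nonneg (real_smul_nonneg (Nat.cast_nonneg n) hc0),
                    abs_of_nonneg ha, Nat.cast_smul_eq_nsmul]
                  exact (hind n).trans inf_le_left
                have h2 := HasSolidNorm.solid h1
                rwa [norm_smul, Real.norm_natCast] at h2
              by_contra hne
              have hpos : 0 < ‖(u ⊔ 0) ⊓ z‖ := norm_pos_iff.mpr hne
              obtain ⟨n, hn⟩ := exists_nat_gt (‖a‖ / ‖(u ⊔ 0) ⊓ z‖)
              rw [div_lt_iff₀ hpos] at hn
              linarith [hnorm n]
            have hxu := hx (u ⊔ 0) ?_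
            · have h1 : u ⊔ 0 ≤ a := by
                have := hu'lb 0 h0Zp
                rwa [inf_eq_right.mpr ha, sub_zero] at this
              have h2 : u ⊔ 0 = 0 := by
                have h3 : a ⊓ (u ⊔ 0) = 0 := by
                  rw [abs_of_nonneg (le_sup_right : (0:X) ≤ u ⊔ 0)] at hxu
                  exact hxu
                rw [inf_comm, inf_eq_left.mpr h1] at h3
                exact h3
              exact le_sup_left.trans h2.le
            · intro v hv
              rw [abs_of_nonneg (le_sup_right : (0:X) ≤ u ⊔ 0)]
              exact hkey |v| ⟨hv, abs_nonneg v⟩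
        have hglb2 := hSoc D ⟨a, haD⟩ hDdir hDglb
        have himg : ∀ t ∈ (fun s => S s) '' D, t = S a := by
          rintro _ ⟨_, ⟨z, hz, rfl⟩, rfl⟩
          have h1 : S (a ⊓ z) = 0 := by
            have h2 := hSmono (inf_le_right : a ⊓ z ≤ z)
            rw [hz.1] at h2
            exact le_antisymm h2 (hSpos _ (le_inf ha hz.2))
          simp [map_sub, h1]
        have h6 : 0 ≤ S a := hglb2.1 ⟨a, haD, rfl⟩
        have h7 : S a ≤ 0 := hglb2.2 fun t ht => (himg t ht).ge
        exact le_antisymm h7 h6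
      · -- ≠ ⊥
        intro hbot
        apply hyne
        have hyZ : y ∈ Z := by rw [hZmem, abs_of_nonneg hy0]; exact hSy
        rw [hbot] at hyZ
        exact (Submodule.mem_bot ℝ).mp hyZ
      · -- ≠ ⊤
        intro htop
        apply hS0
        ext v
        have h1 : ∀ w : X, S |w| = 0 := fun w => (hZmem w).mp (htop ▸ Submodule.mem_top)
        have hple : ∀ w : X, w⁺ ≤ |w| := fun w => by
          rw [posPart_def]
          exact sup_le (le_abs_self w) (abs_nonneg w)
        have hnle : ∀ w : X, w⁻ ≤ |w| := fun w => by
          rw [negPart_def]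
          exact sup_le (neg_le_abs w) (abs_nonneg w)
        have hpv : S v⁺ = 0 := le_antisymm
          (by have := hSmono (hple v); rwa [h1 v] at this) (hSpos _ (posPart_nonneg v))
        have hnv : S v⁻ = 0 := le_antisymm
          (by have := hSmono (hnle v); rwa [h1 v] at this) (hSpos _ (negPart_nonneg v))
        have hv : S v = S v⁺ - S v⁻ := by rw [← map_sub, posPart_sub_negPart]
        simp [hv, hpv, hnv]
      · -- T-invariance
        intro v hv
        rw [hZmem] at hv ⊢
        have h1 : |T v| ≤ T |v| := by
          refine abs_le'.mpr ⟨hTmono (le_abs_self v), ?_⟩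
          rw [← map_neg]
          exact hTmono (neg_le_abs v)
        have h2 := hSmono h1
        have h3 : S (T |v|) = T (S |v|) := by
          simpa [ContinuousLinearMap.mul_apply] using DFunLike.congr_fun hST.eq |v|
        rw [h3, hv, map_zero] at h2
        exact le_antisymm h2 (hSpos _ (abs_nonneg _))
    exact le_sup_left.trans hy.le
end
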